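/- Every 4-edge-connected (possibly infinite) graph has a 4-flow. -/

import Mathlib

set_option linter.unusedSectionVars false

namespace Flow4
open Finset
open scoped Classical

variable {Q : Type*} {E : Type*} [Fintype Q] [DecidableEq Q] [Fintype E] [DecidableEq E]
variable (s t : E → Q)

def adjrel (S : Finset E) (a b : Q) : Prop :=
  ∃ e ∈ S, (s e = a ∧ t e = b) ∨ (s e = b ∧ t e = a)

def conn (S : Finset E) : Q → Q → Prop := Relation.ReflTransGen (adjrel s t S)

variable {s t}

lemma adjrel_symm {S : Finset E} {a b : Q} (h : adjrel s t S a b) : adjrel s t S b a := by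
  obtain ⟨e, he, h⟩ := h; exact ⟨e, he, h.symm⟩

lemma conn_refl (S : Finset E) (a : Q) : conn s t S a a := Relation.ReflTransGen.refl

lemma conn_symm {S : Finset E} {a b : Q} (h : conn s t S a b) : conn s t S b a :=
  by haveI : Std.Symm (adjrel s t S) := ⟨fun _ _ => adjrel_symm⟩; exact Std.Symm.symm (r := Relation.ReflTransGen (adjrel s t S)) _ _ h

lemma conn_trans {S : Finset E} {a b c : Q} (h : conn s t S a b) (h' : conn s t S b c) :
    conn s t S a c := h.trans h'

lemma conn_mono {S T : Finset E} (hST : S ⊆ T) {a b : Q} (h : conn s t S a b) :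
    conn s t T a b :=
  Relation.ReflTransGen.mono (fun _ _ ⟨e, he, hh⟩ => ⟨e, hST he, hh⟩) _ _ h

lemma conn_edge {S : Finset E} {e : E} (he : e ∈ S) : conn s t S (s e) (t e) :=
  Relation.ReflTransGen.single ⟨e, he, Or.inl ⟨rfl, rfl⟩⟩

lemma conn_empty {a b : Q} (h : conn s t (∅ : Finset E) a b) : a = b := by
  induction h with
  | refl => rfl
  | tail _ h2 ih => obtain ⟨e, he, _⟩ := h2; exact absurd he (by simp)

lemma conn_le_edges {A W : Finset E} (h : ∀ e ∈ A, conn s t W (s e) (t e)) :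
    ∀ x y, conn s t A x y → conn s t W x y := by
  intro x y hxy
  induction hxy with
  | refl => exact conn_refl _ _
  | tail _ h2 ih =>
      obtain ⟨e, he, hh⟩ := h2
      rcases hh with ⟨h1, h2⟩ | ⟨h1, h2⟩
      · exact ih.trans (h1 ▸ h2 ▸ h e he)
      · exact ih.trans (h1 ▸ h2 ▸ (conn_symm (h e he)))

lemma conn_insert {S : Finset E} {a : E} {x y : Q} :
    conn s t (insert a S) x y ↔
      conn s t S x y ∨ (conn s t S x (s a) ∧ conn s t S (t a) y) ∨
        (conn s t S x (t a) ∧ conn s t S (s a) y) := by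
  constructor
  · intro h
    induction h with
    | refl => exact Or.inl (conn_refl _ _)
    | tail _ h2 ih =>
        rename_i b c _
        obtain ⟨e, he, hh⟩ := h2
        rcases Finset.mem_insert.mp he with rfl | heS
        · -- the new edge
          rcases hh with ⟨hb, hc⟩ | ⟨hc, hb⟩
          · subst hb; subst hc
            rcases ih with h1 | ⟨h1, h2⟩ | ⟨h1, h2⟩
            · exact Or.inr (Or.inl ⟨h1, conn_refl _ _⟩)
            · exact Or.inr (Or.inl ⟨h1, conn_refl _ _⟩)
            · exact Or.inl h1
          · subst hb; subst hc
            rcases ih with h1 | ⟨h1, h2⟩ | ⟨h1, h2⟩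
            · exact Or.inr (Or.inr ⟨h1, conn_refl _ _⟩)
            · exact Or.inl h1
            · exact Or.inr (Or.inr ⟨h1, conn_refl _ _⟩)
        · -- an old edge
          have hbc : conn s t S b c := Relation.ReflTransGen.single ⟨e, heS, hh⟩
          rcases ih with h1 | ⟨h1, h2⟩ | ⟨h1, h2⟩
          · exact Or.inl (h1.trans hbc)
          · exact Or.inr (Or.inl ⟨h1, h2.trans hbc⟩)
          · exact Or.inr (Or.inr ⟨h1, h2.trans hbc⟩)
  · intro h
    have hsub : S ⊆ insert a S := Finset.subset_insert _ _
    have hedge : conn s t (insert a S) (s a) (t a) := conn_edge (Finset.mem_insert_self _ _)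
    rcases h with h1 | ⟨h1, h2⟩ | ⟨h1, h2⟩
    · exact conn_mono hsub h1
    · exact ((conn_mono hsub h1).trans hedge).trans (conn_mono hsub h2)
    · exact ((conn_mono hsub h1).trans (conn_symm hedge)).trans (conn_mono hsub h2)

lemma conn_insert_of_conn {S : Finset E} {a : E} (h : conn s t S (s a) (t a)) {x y : Q} :
    conn s t (insert a S) x y ↔ conn s t S x y := by
  rw [conn_insert]
  constructor
  · rintro (h1 | ⟨h1, h2⟩ | ⟨h1, h2⟩)
    · exact h1
    · exact (h1.trans h).trans h2
    · exact (h1.trans (conn_symm h)).trans h2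
  · exact Or.inl

variable (s t)

noncomputable def cls (S : Finset E) (q : Q) : Finset Q := univ.filter (conn s t S q)

noncomputable def classes (S : Finset E) : Finset (Finset Q) := univ.image (cls s t S)

noncomputable def ncomp (S : Finset E) : ℕ := (classes s t S).card

variable {s t}

lemma mem_cls {S : Finset E} {q p : Q} : p ∈ cls s t S q ↔ conn s t S q p := by
  simp [cls]

lemma cls_self {S : Finset E} (q : Q) : q ∈ cls s t S q := mem_cls.mpr (conn_refl _ _)

lemma cls_eq_cls {S : Finset E} {a b : Q} : cls s t S a = cls s t S b ↔ conn s t S a b := by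
  constructor
  · intro h
    have : a ∈ cls s t S b := h ▸ cls_self a
    exact conn_symm (mem_cls.mp this)
  · intro h
    ext p
    simp only [mem_cls]
    exact ⟨fun hp => (conn_symm h).trans hp, fun hp => h.trans hp⟩

lemma cls_mem_classes (S : Finset E) (q : Q) : cls s t S q ∈ classes s t S :=
  Finset.mem_image_of_mem _ (Finset.mem_univ q)

lemma ncomp_le_of_conn_le {S T : Finset E}
    (h : ∀ x y : Q, conn s t S x y → conn s t T x y) :
    ncomp s t T ≤ ncomp s t S := by
  apply Finset.card_le_card_of_surjOn
    (fun C => if hC : ∃ q, C = cls s t S q then cls s t T hC.choose else ∅)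
  intro D hD
  simp only [classes, Finset.coe_image, Set.mem_image] at hD ⊢
  obtain ⟨q, _, rfl⟩ := hD
  refine ⟨cls s t S q, ⟨q, by simp, rfl⟩, ?_⟩
  have hC : ∃ p, cls s t S q = cls s t S p := ⟨q, rfl⟩
  rw [dif_pos hC]
  have := hC.choose_spec
  have hconn : conn s t S q hC.choose := cls_eq_cls.mp this
  exact (cls_eq_cls.mpr (h _ _ hconn)).symm

lemma ncomp_congr {S T : Finset E} (h : ∀ x y : Q, conn s t S x y ↔ conn s t T x y) :
    ncomp s t S = ncomp s t T :=
  le_antisymm (ncomp_le_of_conn_le (fun x y => (h x y).mpr))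
    (ncomp_le_of_conn_le (fun x y => (h x y).mp))

lemma ncomp_empty : ncomp s t (∅ : Finset E) = Fintype.card Q := by
  have h : cls s t (∅ : Finset E) = fun q => ({q} : Finset Q) := by
    funext q; ext p
    simp only [mem_cls, Finset.mem_singleton]
    exact ⟨fun h => (conn_empty h).symm, fun h => h ▸ conn_refl _ _⟩
  unfold ncomp classes
  rw [h, Finset.card_image_of_injective _ (fun a b hab => by
    simpa using Finset.singleton_injective hab)]
  simp

lemma ncomp_insert_of_conn {S : Finset E} {a : E} (h : conn s t S (s a) (t a)) :
    ncomp s t (insert a S) = ncomp s t S :=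
  ncomp_congr (fun _ _ => conn_insert_of_conn h)

lemma ncomp_insert_of_not_conn {S : Finset E} {a : E} (h : ¬ conn s t S (s a) (t a)) :
    ncomp s t (insert a S) + 1 = ncomp s t S := by
  set u := s a with hu
  set v := t a with hv
  have key : ∀ q : Q, cls s t (insert a S) q =
      if conn s t S q u ∨ conn s t S q v then cls s t S u ∪ cls s t S v else cls s t S q := by
    intro q
    by_cases hq : conn s t S q u ∨ conn s t S q v
    · rw [if_pos hq]
      ext p
      simp only [mem_cls, Finset.mem_union, conn_insert]
      rcases hq with hq | hq
      · have hnv : ¬ conn s t S q v := fun hv' => h ((conn_symm hq).trans hv')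
        constructor
        · rintro (h1 | ⟨h1, h2⟩ | ⟨h1, h2⟩)
          · exact Or.inl ((conn_symm hq).trans h1)
          · exact Or.inr h2
          · exact absurd h1 hnv
        · rintro (h1 | h1)
          · exact Or.inl (hq.trans h1)
          · exact Or.inr (Or.inl ⟨hq, h1⟩)
      · have hnu : ¬ conn s t S q u := fun hu' => h (conn_symm ((conn_symm hq).trans hu'))
        constructor
        · rintro (h1 | ⟨h1, h2⟩ | ⟨h1, h2⟩)
          · exact Or.inr ((conn_symm hq).trans h1)
          · exact absurd h1 hnu
          · exact Or.inl h2
        · rintro (h1 | h1)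
          · exact Or.inr (Or.inr ⟨hq, h1⟩)
          · exact Or.inl (hq.trans h1)
    · rw [if_neg hq]
      push_neg at hq
      ext p
      simp only [mem_cls, conn_insert]
      constructor
      · rintro (h1 | ⟨h1, h2⟩ | ⟨h1, h2⟩)
        · exact h1
        · exact absurd h1 hq.1
        · exact absurd h1 hq.2
      · exact Or.inl
  have hne : cls s t S u ≠ cls s t S v := fun hh => h (cls_eq_cls.mp hh)
  have hUnotin : cls s t S u ∪ cls s t S v ∉ classes s t S := by
    intro hmem
    simp only [classes, Finset.mem_image] at hmem
    obtain ⟨q, _, hq⟩ := hmem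
    have hu' : u ∈ cls s t S q := hq ▸ Finset.mem_union_left _ (cls_self u)
    have hv' : v ∈ cls s t S q := hq ▸ Finset.mem_union_right _ (cls_self v)
    exact h ((conn_symm (mem_cls.mp hu')).trans (mem_cls.mp hv'))
  have hclasses : classes s t (insert a S) =
      insert (cls s t S u ∪ cls s t S v)
        (((classes s t S).erase (cls s t S u)).erase (cls s t S v)) := by
    ext C
    simp only [classes, Finset.mem_image, Finset.mem_insert, Finset.mem_erase]
    constructor
    · rintro ⟨q, _, rfl⟩
      rw [key q]
      by_cases hq : conn s t S q u ∨ conn s t S q v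
      · rw [if_pos hq]; exact Or.inl rfl
      · rw [if_neg hq]
        push_neg at hq
        refine Or.inr ⟨fun hh => hq.2 (cls_eq_cls.mp hh), fun hh => hq.1 (cls_eq_cls.mp hh),
          ⟨q, Finset.mem_univ q, rfl⟩⟩
    · rintro (rfl | ⟨hnv', hnu', q, _, rfl⟩)
      · exact ⟨u, Finset.mem_univ u, by rw [key u, if_pos (Or.inl (conn_refl _ _))]⟩
      · refine ⟨q, Finset.mem_univ q, ?_⟩
        rw [key q, if_neg ?_]
        push_neg
        exact ⟨fun hh => hnu' (cls_eq_cls.mpr hh), fun hh => hnv' (cls_eq_cls.mpr hh)⟩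
  have hmemu : cls s t S u ∈ classes s t S := cls_mem_classes S u
  have hmemv : cls s t S v ∈ (classes s t S).erase (cls s t S u) :=
    Finset.mem_erase.mpr ⟨fun hh => hne hh.symm, cls_mem_classes S v⟩
  have hUnotin' : cls s t S u ∪ cls s t S v ∉
      ((classes s t S).erase (cls s t S u)).erase (cls s t S v) := by
    intro hh
    exact hUnotin (Finset.mem_of_mem_erase (Finset.mem_of_mem_erase hh))
  have h2le : 2 ≤ (classes s t S).card :=
    Finset.one_lt_card.mpr ⟨_, hmemu, _, Finset.mem_of_mem_erase hmemv, hne⟩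
  unfold ncomp
  rw [hclasses, Finset.card_insert_of_notMem hUnotin', Finset.card_erase_of_mem hmemv,
    Finset.card_erase_of_mem hmemu]
  omega

lemma le_card_add_ncomp (S : Finset E) : Fintype.card Q ≤ S.card + ncomp s t S := by
  induction S using Finset.induction_on with
  | empty => rw [ncomp_empty]; simp
  | @insert a S ha ih =>
      by_cases h : conn s t S (s a) (t a)
      · rw [ncomp_insert_of_conn h, Finset.card_insert_of_notMem ha]; omega
      · have := ncomp_insert_of_not_conn h
        rw [Finset.card_insert_of_notMem ha]; omega

variable (s t) in
def isForest (S : Finset E) : Prop := S.card + ncomp s t S = Fintype.card Q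

lemma isForest_empty : isForest s t (∅ : Finset E) := by
  unfold isForest; rw [ncomp_empty]; simp

lemma isForest_insert {S : Finset E} {a : E} (hF : isForest s t S)
    (h : ¬ conn s t S (s a) (t a)) : isForest s t (insert a S) := by
  have ha : a ∉ S := fun ha => h (conn_edge ha)
  have := ncomp_insert_of_not_conn h
  unfold isForest at *
  rw [Finset.card_insert_of_notMem ha]
  omega

lemma isForest_erase {S : Finset E} {a : E} (hF : isForest s t S) (ha : a ∈ S) :
    isForest s t (S.erase a) ∧ ¬ conn s t (S.erase a) (s a) (t a) := by
  have hins : insert a (S.erase a) = S := Finset.insert_erase ha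
  have hcard : (S.erase a).card + 1 = S.card := by
    rw [Finset.card_erase_of_mem ha]
    have : 1 ≤ S.card := Finset.card_pos.mpr ⟨a, ha⟩
    omega
  have hbound := le_card_add_ncomp (s := s) (t := t) (S.erase a)
  by_cases h : conn s t (S.erase a) (s a) (t a)
  · exfalso
    have h1 := ncomp_insert_of_conn (a := a) (S := S.erase a) h
    rw [hins] at h1
    unfold isForest at hF
    omega
  · have h1 := ncomp_insert_of_not_conn (a := a) (S := S.erase a) h
    rw [hins] at h1
    refine ⟨?_, h⟩
    unfold isForest at *
    omega

lemma isForest_subset : ∀ S : Finset E, isForest s t S → ∀ T ⊆ S, isForest s t T := by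
  intro S
  induction S using Finset.strongInduction with
  | _ S ih =>
      intro hF T hT
      by_cases hTS : T = S
      · exact hTS ▸ hF
      · obtain ⟨a, haS, haT⟩ := Finset.exists_of_ssubset (lt_of_le_of_ne hT hTS)
        have h1 := (isForest_erase hF haS).1
        exact ih _ (Finset.erase_ssubset haS) h1 T
          (fun x hx => Finset.mem_erase.mpr ⟨fun hxa => haT (hxa ▸ hx), hT hx⟩)

lemma ncomp_pos (h : Nonempty Q) : 1 ≤ ncomp s t (S : Finset E) := by
  have := cls_mem_classes (s := s) (t := t) S h.some
  exact Finset.card_pos.mpr ⟨_, this⟩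

/-- In a forest, two separate "bridges" for the pair (u,v) cannot both exist on
alternate routes: if u,v are connected avoiding a and avoiding b, they are
connected avoiding both. -/
lemma forest_fork {F : Finset E} (hF : isForest s t F) {a b : E} (ha : a ∈ F) (hb : b ∈ F)
    (hab : a ≠ b) {u v : Q} (hc : conn s t F u v)
    (hca : conn s t (F.erase a) u v) (hcb : conn s t (F.erase b) u v) :
    conn s t ((F.erase a).erase b) u v := by
  by_contra hS
  set S := (F.erase a).erase b with hSdef
  have hSsub : S ⊆ F := (Finset.erase_subset _ _).trans (Finset.erase_subset _ _)
  have hSforest : isForest s t S := isForest_subset F hF S hSsub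
  have hinsA : insert a S = F.erase b := by
    rw [hSdef, Finset.erase_right_comm]
    exact Finset.insert_erase (Finset.mem_erase.mpr ⟨hab, ha⟩)
  have hinsB : insert b S = F.erase a := by
    rw [hSdef]
    exact Finset.insert_erase (Finset.mem_erase.mpr ⟨Ne.symm hab, hb⟩)
  -- from conn (insert a S) u v and ¬ conn S u v : ends of a bridge u,v
  have hA : (conn s t S u (s a) ∧ conn s t S (t a) v) ∨
      (conn s t S u (t a) ∧ conn s t S (s a) v) := by
    have := (conn_insert (a := a) (S := S) (x := u) (y := v)).mp (hinsA ▸ hcb)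
    rcases this with h1 | h1 | h1
    · exact absurd h1 hS
    · exact Or.inl h1
    · exact Or.inr h1
  have hB : (conn s t S u (s b) ∧ conn s t S (t b) v) ∨
      (conn s t S u (t b) ∧ conn s t S (s b) v) := by
    have := (conn_insert (a := b) (S := S) (x := u) (y := v)).mp (hinsB ▸ hca)
    rcases this with h1 | h1 | h1
    · exact absurd h1 hS
    · exact Or.inl h1
    · exact Or.inr h1
  -- a's ends are not S-connected
  have hna : ¬ conn s t S (s a) (t a) := by
    intro hcon
    rcases hA with ⟨h1, h2⟩ | ⟨h1, h2⟩
    · exact hS ((h1.trans hcon).trans h2)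
    · exact hS ((h1.trans (conn_symm hcon)).trans h2)
  have h1 : ncomp s t (insert a S) + 1 = ncomp s t S := ncomp_insert_of_not_conn hna
  -- b's ends ARE connected in insert a S
  have huv' : conn s t (insert a S) u v := hinsA ▸ hcb
  have hcb' : conn s t (insert a S) (s b) (t b) := by
    have hmono : ∀ x y : Q, conn s t S x y → conn s t (insert a S) x y :=
      fun x y h => conn_mono (Finset.subset_insert _ _) h
    rcases hB with ⟨h1', h2'⟩ | ⟨h1', h2'⟩
    · exact ((conn_symm (hmono _ _ h1')).trans huv').trans (conn_symm (hmono _ _ h2'))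
    · exact conn_symm (((conn_symm (hmono _ _ h1')).trans huv').trans
        (conn_symm (hmono _ _ h2')))
  have h2 : ncomp s t (insert b (insert a S)) = ncomp s t (insert a S) :=
    ncomp_insert_of_conn hcb'
  have hinsBA : insert b (insert a S) = F := by
    rw [Finset.insert_comm, hinsB]
    exact Finset.insert_erase ha
  have hcards : S.card + 2 = F.card := by
    have c1 : (F.erase a).card + 1 = F.card := by
      rw [Finset.card_erase_of_mem ha]
      have : 1 ≤ F.card := Finset.card_pos.mpr ⟨a, ha⟩
      omega
    have c2 : S.card + 1 = (F.erase a).card := by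
      rw [hSdef, Finset.card_erase_of_mem (Finset.mem_erase.mpr ⟨hab.symm, hb⟩)]
      have : 1 ≤ (F.erase a).card := Finset.card_pos.mpr
        ⟨b, Finset.mem_erase.mpr ⟨hab.symm, hb⟩⟩
      omega
    omega
  have hFn : ncomp s t F = ncomp s t (insert a S) := hinsBA ▸ h2
  unfold isForest at hF hSforest
  omega

variable (s t) in
noncomputable def bridges (F : Finset E) (u v : Q) : Finset E :=
  F.filter (fun e => ¬ conn s t (F.erase e) u v)

lemma conn_bridges {u v : Q} : ∀ F : Finset E, isForest s t F → conn s t F u v →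
    conn s t (bridges s t F u v) u v := by
  intro F
  induction F using Finset.strongInduction with
  | _ F ih =>
      intro hF hc
      by_cases hall : ∀ a ∈ F, ¬ conn s t (F.erase a) u v
      · have heq : bridges s t F u v = F := Finset.filter_true_of_mem hall
        rw [heq]
        exact hc
      · push_neg at hall
        obtain ⟨a, haF, hca⟩ := hall
        have hFa : isForest s t (F.erase a) := (isForest_erase hF haF).1
        have hrec := ih (F.erase a) (Finset.erase_ssubset haF) hFa hca
        refine conn_mono ?_ hrec
        intro e he
        rw [bridges, Finset.mem_filter] at he ⊢
        obtain ⟨heF, hbr⟩ := he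
        have heF' : e ∈ F := Finset.mem_of_mem_erase heF
        have hea : e ≠ a := (Finset.mem_erase.mp heF).1
        refine ⟨heF', fun hcon => hbr ?_⟩
        have := forest_fork hF haF heF' (fun h => hea h.symm) hc hca hcon
        exact this

lemma exchange {F : Finset E} (hF : isForest s t F) {e e' : E} (hee : e ∉ F)
    (hc : conn s t F (s e) (t e)) (he' : e' ∈ F)
    (hbr : ¬ conn s t (F.erase e') (s e) (t e)) :
    isForest s t (insert e (F.erase e')) ∧
      (∀ x y : Q, conn s t (insert e (F.erase e')) x y ↔ conn s t F x y) := by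
  obtain ⟨hF', hbre'⟩ := isForest_erase hF he'
  have hforest : isForest s t (insert e (F.erase e')) := isForest_insert hF' hbr
  have hn1 : ncomp s t (insert e (F.erase e')) + 1 = ncomp s t (F.erase e') :=
    ncomp_insert_of_not_conn hbr
  have hn2 : ncomp s t F + 1 = ncomp s t (F.erase e') := by
    have := ncomp_insert_of_not_conn hbre'
    rwa [Finset.insert_erase he'] at this
  have hc2 : conn s t (insert e (F.erase e')) (s e') (t e') := by
    by_contra hcon
    have h3 : ncomp s t (insert e' (insert e (F.erase e'))) + 1 =
        ncomp s t (insert e (F.erase e')) := ncomp_insert_of_not_conn hcon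
    have heq : insert e' (insert e (F.erase e')) = insert e F := by
      rw [Finset.insert_comm, Finset.insert_erase he']
    rw [heq, ncomp_insert_of_conn hc] at h3
    omega
  refine ⟨hforest, fun x y => ⟨fun h => ?_, fun h => ?_⟩⟩
  · have h1 : conn s t (insert e F) x y :=
      conn_mono (Finset.insert_subset_insert _ (Finset.erase_subset _ _)) h
    exact (conn_insert_of_conn hc).mp h1
  · have h1 : conn s t (insert e' (insert e (F.erase e'))) x y := by
      refine conn_mono ?_ h
      intro z hz
      by_cases hze : z = e'
      · exact hze ▸ Finset.mem_insert_self _ _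
      · exact Finset.mem_insert_of_mem (Finset.mem_insert_of_mem
          (Finset.mem_erase.mpr ⟨hze, hz⟩))
    exact (conn_insert_of_conn hc2).mp h1

section NWT

variable (s t) in
def goodP (P : Bool → Finset E) : Prop :=
  isForest s t (P true) ∧ isForest s t (P false) ∧ Disjoint (P true) (P false)

def wt (P : Bool → Finset E) : ℕ := (P true).card + (P false).card

def freeE (P : Bool → Finset E) (e : E) : Prop := e ∉ P true ∧ e ∉ P false

lemma goodP_forest {P : Bool → Finset E} (h : goodP s t P) (i : Bool) : isForest s t (P i) := by
  cases i
  · exact h.2.1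
  · exact h.1

lemma goodP_disj {P : Bool → Finset E} (h : goodP s t P) {i : Bool} {e : E}
    (he : e ∈ P i) : e ∉ P (!i) := by
  cases i
  · exact Finset.disjoint_right.mp h.2.2 he
  · exact Finset.disjoint_left.mp h.2.2 he

lemma freeE_iff {P : Bool → Finset E} {e : E} : freeE P e ↔ ∀ i, e ∉ P i := by
  constructor
  · rintro ⟨h1, h2⟩ i; cases i
    · exact h2
    · exact h1
  · intro h; exact ⟨h true, h false⟩

variable (s t) in
def stepRel (P P' : Bool → Finset E) : Prop :=
  ∃ (i : Bool) (e e' : E), freeE P e ∧ e' ∈ P i ∧ conn s t (P i) (s e) (t e) ∧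
    ¬ conn s t ((P i).erase e') (s e) (t e) ∧
    P' = Function.update P i (insert e ((P i).erase e'))

lemma step_props {P P' : Bool → Finset E} (hst : stepRel s t P P') (hg : goodP s t P) :
    goodP s t P' ∧ wt P' = wt P ∧ (∀ j x y, conn s t (P' j) x y ↔ conn s t (P j) x y) := by
  obtain ⟨i, e, e', hfree, he', hc, hbr, rfl⟩ := hst
  have heP : e ∉ P i := freeE_iff.mp hfree i
  have hforest : isForest s t (P i) := goodP_forest hg i
  obtain ⟨hF', hconn'⟩ := exchange hforest heP hc he' hbr
  have hupd : ∀ j, Function.update P i (insert e ((P i).erase e')) j =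
      if j = i then insert e ((P i).erase e') else P j := by
    intro j
    by_cases hj : j = i
    · subst hj; simp
    · rw [Function.update_of_ne hj, if_neg hj]
  have hcard : (insert e ((P i).erase e')).card = (P i).card := by
    have h1 : e ∉ (P i).erase e' := fun h => heP (Finset.mem_of_mem_erase h)
    rw [Finset.card_insert_of_notMem h1, Finset.card_erase_of_mem he']
    have : 1 ≤ (P i).card := Finset.card_pos.mpr ⟨e', he'⟩
    omega
  have hsub : insert e ((P i).erase e') ⊆ insert e (P i) :=
    Finset.insert_subset_insert _ (Finset.erase_subset _ _)
  have hdisj : Disjoint (Function.update P i (insert e ((P i).erase e')) true)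
      (Function.update P i (insert e ((P i).erase e')) false) := by
    rw [hupd true, hupd false]
    have hd : Disjoint (P true) (P false) := hg.2.2
    cases i
    · simp only [if_neg (by simp : ¬ (true = false)), if_pos rfl]
      rw [Finset.disjoint_right]
      intro z hz
      rcases Finset.mem_insert.mp hz with rfl | hz'
      · exact freeE_iff.mp hfree true
      · exact fun hzt => (Finset.disjoint_left.mp hd hzt) (Finset.mem_of_mem_erase hz')
    · simp only [if_pos rfl, if_neg (by simp : ¬ (false = true))]
      rw [Finset.disjoint_left]
      intro z hz
      rcases Finset.mem_insert.mp hz with rfl | hz'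
      · exact freeE_iff.mp hfree false
      · exact fun hzt => (Finset.disjoint_right.mp hd hzt) (Finset.mem_of_mem_erase hz')
  refine ⟨?_, ?_, ?_⟩
  · refine ⟨?_, ?_, hdisj⟩
    · rw [hupd true]
      by_cases h1 : (true : Bool) = i
      · rw [if_pos h1]; exact hF'
      · rw [if_neg h1]; exact hg.1
    · rw [hupd false]
      by_cases h1 : (false : Bool) = i
      · rw [if_pos h1]; exact hF'
      · rw [if_neg h1]; exact hg.2.1
  · unfold wt
    rw [hupd true, hupd false]
    by_cases h1 : (true : Bool) = i
    · rw [if_pos h1, if_neg (by simp [← h1])]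
      rw [hcard, ← h1]
    · rw [if_neg h1, if_pos (by cases i <;> simp_all)]
      have h2 : (false : Bool) = i := by cases i <;> simp_all
      rw [hcard, ← h2]
  · intro j x y
    rw [hupd j]
    by_cases hj : j = i
    · rw [if_pos hj, hj]; exact hconn' x y
    · rw [if_neg hj]

variable (s t) in
def reach (P0 P : Bool → Finset E) : Prop := Relation.ReflTransGen (stepRel s t) P0 P

section withMax

variable {P0 : Bool → Finset E} (hg0 : goodP s t P0)
  (hm0 : ∀ P, goodP s t P → wt P ≤ wt P0)

include hg0

lemma reach_props {P : Bool → Finset E} (hr : reach s t P0 P) :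
    goodP s t P ∧ wt P = wt P0 ∧ (∀ j x y, conn s t (P j) x y ↔ conn s t (P0 j) x y) := by
  induction hr with
  | refl => exact ⟨hg0, rfl, fun _ _ _ => Iff.rfl⟩
  | tail hr1 hstep ih =>
      obtain ⟨hg, hwt, hcn⟩ := ih
      obtain ⟨hg', hwt', hcn'⟩ := step_props hstep hg
      exact ⟨hg', hwt'.trans hwt, fun j x y => (hcn' j x y).trans (hcn j x y)⟩

include hm0

lemma free_conn {P : Bool → Finset E} (hr : reach s t P0 P) {e : E} (hfree : freeE P e)
    (i : Bool) : conn s t (P i) (s e) (t e) := by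
  obtain ⟨hg, hwt, _⟩ := reach_props hg0 hr
  by_contra hcon
  have hgood' : goodP s t (Function.update P i (insert e (P i))) := by
    have hupd : ∀ j, Function.update P i (insert e (P i)) j =
        if j = i then insert e (P i) else P j := by
      intro j
      by_cases hj : j = i
      · subst hj; simp
      · rw [Function.update_of_ne hj, if_neg hj]
    have hFins : isForest s t (insert e (P i)) := isForest_insert (goodP_forest hg i) hcon
    have hdisj : Disjoint (Function.update P i (insert e (P i)) true)
        (Function.update P i (insert e (P i)) false) := by
      rw [hupd true, hupd false]
      have hd : Disjoint (P true) (P false) := hg.2.2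
      cases i
      · simp only [if_neg (by simp : ¬ (true = false)), if_pos rfl]
        rw [Finset.disjoint_right]
        intro z hz
        rcases Finset.mem_insert.mp hz with rfl | hz'
        · exact freeE_iff.mp hfree true
        · exact fun hzt => (Finset.disjoint_left.mp hd hzt) hz'
      · simp only [if_pos rfl, if_neg (by simp : ¬ (false = true))]
        rw [Finset.disjoint_left]
        intro z hz
        rcases Finset.mem_insert.mp hz with rfl | hz'
        · exact freeE_iff.mp hfree false
        · exact fun hzt => (Finset.disjoint_right.mp hd hzt) hz'
    refine ⟨?_, ?_, hdisj⟩
    · rw [hupd true]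
      by_cases h1 : (true : Bool) = i
      · rw [if_pos h1]; exact hFins
      · rw [if_neg h1]; exact hg.1
    · rw [hupd false]
      by_cases h1 : (false : Bool) = i
      · rw [if_pos h1]; exact hFins
      · rw [if_neg h1]; exact hg.2.1
  have hwt' : wt (Function.update P i (insert e (P i))) ≤ wt P0 := hm0 _ hgood'
  have hcardins : (insert e (P i)).card = (P i).card + 1 :=
    Finset.card_insert_of_notMem (freeE_iff.mp hfree i)
  have : wt (Function.update P i (insert e (P i))) = wt P + 1 := by
    unfold wt
    cases i
    · rw [Function.update_of_ne (by simp), Function.update_self, hcardins]; omega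
    · rw [Function.update_self, Function.update_of_ne (by simp), hcardins]; omega
  omega

variable (s t P0) in
noncomputable def Estar : Finset E :=
  univ.filter (fun e => ∃ P, reach s t P0 P ∧ freeE P e)

omit hg0 hm0 in
lemma mem_Estar_of_free {P : Bool → Finset E} (hr : reach s t P0 P) {e : E}
    (hfree : freeE P e) : e ∈ Estar s t P0 := by
  rw [Estar, Finset.mem_filter]
  exact ⟨Finset.mem_univ _, P, hr, hfree⟩

lemma bridge_step {P : Bool → Finset E} (hr : reach s t P0 P) {e : E} (hfree : freeE P e)
    {i : Bool} {e'' : E} (he'' : e'' ∈ bridges s t (P i) (s e) (t e)) :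
    stepRel s t P (Function.update P i (insert e ((P i).erase e''))) ∧
      e'' ∈ Estar s t P0 := by
  obtain ⟨hg, _, _⟩ := reach_props hg0 hr
  rw [bridges, Finset.mem_filter] at he''
  obtain ⟨hmem, hbr⟩ := he''
  have hc : conn s t (P i) (s e) (t e) := free_conn hg0 hm0 hr hfree i
  have hstep : stepRel s t P (Function.update P i (insert e ((P i).erase e''))) :=
    ⟨i, e, e'', hfree, hmem, hc, hbr, rfl⟩
  refine ⟨hstep, ?_⟩
  refine mem_Estar_of_free (hr.tail hstep) ?_
  rw [freeE_iff]
  intro j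
  by_cases hj : j = i
  · subst hj
    rw [Function.update_self]
    intro hmem'
    rcases Finset.mem_insert.mp hmem' with h1 | h1
    · exact (freeE_iff.mp hfree j) (h1 ▸ hmem)
    · exact (Finset.mem_erase.mp h1).1 rfl
  · rw [Function.update_of_ne hj]
    have : j = !i := by cases i <;> cases j <;> simp_all
    exact this ▸ goodP_disj hg hmem

lemma conn_inter_Estar {P : Bool → Finset E} (hr : reach s t P0 P) {e : E}
    (hfree : freeE P e) (i : Bool) :
    conn s t (P i ∩ Estar s t P0) (s e) (t e) := by
  obtain ⟨hg, _, _⟩ := reach_props hg0 hr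
  have hc : conn s t (P i) (s e) (t e) := free_conn hg0 hm0 hr hfree i
  have hB : conn s t (bridges s t (P i) (s e) (t e)) (s e) (t e) :=
    conn_bridges (P i) (goodP_forest hg i) hc
  refine conn_mono ?_ hB
  intro z hz
  refine Finset.mem_inter.mpr ⟨Finset.mem_of_mem_filter _ hz, ?_⟩
  exact (bridge_step hg0 hm0 hr hfree hz).2

lemma step_conn_inter {P P' : Bool → Finset E} (hr : reach s t P0 P)
    (hst : stepRel s t P P') :
    ∀ j x y, conn s t (P' j ∩ Estar s t P0) x y ↔ conn s t (P j ∩ Estar s t P0) x y := by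
  obtain ⟨hg, _, _⟩ := reach_props hg0 hr
  obtain ⟨i, e, e', hfree, he', hc, hbr, rfl⟩ := hst
  set A := Estar s t P0 with hA
  intro j x y
  by_cases hj : j = i
  swap
  · rw [Function.update_of_ne hj]
  subst hj
  rw [Function.update_self]
  set B := bridges s t (P j) (s e) (t e) with hBdef
  have hBsub : B ⊆ P j ∩ A := by
    intro z hz
    refine Finset.mem_inter.mpr ⟨Finset.mem_of_mem_filter _ hz, ?_⟩
    exact (bridge_step hg0 hm0 hr hfree hz).2
  have hBconn : conn s t B (s e) (t e) :=
    conn_bridges (P j) (goodP_forest hg j) hc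
  have he'B : e' ∈ B := by
    rw [hBdef, bridges, Finset.mem_filter]
    exact ⟨he', hbr⟩
  have heA : e ∈ A := mem_Estar_of_free hr hfree
  have heP : e ∉ P j := freeE_iff.mp hfree j
  have hPsub : insert e ((P j).erase e') ∩ A ⊆ insert e (P j ∩ A) := by
    intro z hz
    obtain ⟨hz1, hz2⟩ := Finset.mem_inter.mp hz
    rcases Finset.mem_insert.mp hz1 with rfl | hz3
    · exact Finset.mem_insert_self _ _
    · exact Finset.mem_insert_of_mem
        (Finset.mem_inter.mpr ⟨Finset.mem_of_mem_erase hz3, hz2⟩)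
  have hconnPA : conn s t (P j ∩ A) (s e) (t e) := conn_mono hBsub hBconn
  constructor
  · intro h
    have h1 : conn s t (insert e (P j ∩ A)) x y := conn_mono hPsub h
    exact (conn_insert_of_conn hconnPA).mp h1
  · intro h
    -- route within the new forest: first connect e' ends inside it
    have hsplit : (conn s t (B.erase e') (s e) (s e') ∧ conn s t (B.erase e') (t e') (t e)) ∨
        (conn s t (B.erase e') (s e) (t e') ∧ conn s t (B.erase e') (s e') (t e)) := by
      have hBin : conn s t (insert e' (B.erase e')) (s e) (t e) := by
        rw [Finset.insert_erase he'B]; exact hBconn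
      rcases conn_insert.mp hBin with h1 | h1 | h1
      · exfalso
        apply hbr
        refine conn_mono ?_ h1
        intro z hz
        obtain ⟨hz1, hz2⟩ := Finset.mem_erase.mp hz
        exact Finset.mem_erase.mpr ⟨hz1, Finset.mem_of_mem_filter _ hz2⟩
      · exact Or.inl h1
      · exact Or.inr h1
    set W := insert e (B.erase e') with hW
    have hWsub : W ⊆ insert e ((P j).erase e') ∩ A := by
      intro z hz
      rcases Finset.mem_insert.mp hz with rfl | hz1
      · exact Finset.mem_inter.mpr ⟨Finset.mem_insert_self _ _, heA⟩
      · obtain ⟨hz2, hz3⟩ := Finset.mem_erase.mp hz1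
        obtain ⟨hz4, hz5⟩ := Finset.mem_inter.mp (hBsub hz3)
        exact Finset.mem_inter.mpr
          ⟨Finset.mem_insert_of_mem (Finset.mem_erase.mpr ⟨hz2, hz4⟩), hz5⟩
    have hWe : conn s t W (s e) (t e) := conn_edge (Finset.mem_insert_self _ _)
    have hWB : ∀ x' y' : Q, conn s t (B.erase e') x' y' → conn s t W x' y' :=
      fun _ _ hh => conn_mono (Finset.subset_insert _ _) hh
    have hce' : conn s t W (s e') (t e') := by
      rcases hsplit with ⟨h1, h2⟩ | ⟨h1, h2⟩
      · exact ((conn_symm (hWB _ _ h1)).trans hWe).trans (conn_symm (hWB _ _ h2))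
      · exact (hWB _ _ h2).trans ((conn_symm hWe).trans (hWB _ _ h1))
    have hce'' : conn s t (insert e ((P j).erase e') ∩ A) (s e') (t e') :=
      conn_mono hWsub hce'
    have hsub2 : P j ∩ A ⊆ insert e' (insert e ((P j).erase e') ∩ A) := by
      intro z hz
      obtain ⟨hz1, hz2⟩ := Finset.mem_inter.mp hz
      by_cases hze : z = e'
      · exact hze ▸ Finset.mem_insert_self _ _
      · exact Finset.mem_insert_of_mem (Finset.mem_inter.mpr
          ⟨Finset.mem_insert_of_mem (Finset.mem_erase.mpr ⟨hze, hz1⟩), hz2⟩)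
    have h1 : conn s t (insert e' (insert e ((P j).erase e') ∩ A)) x y := conn_mono hsub2 h
    exact (conn_insert_of_conn hce'').mp h1

lemma reach_conn_inter {P : Bool → Finset E} (hr : reach s t P0 P) :
    ∀ j x y, conn s t (P j ∩ Estar s t P0) x y ↔
      conn s t (P0 j ∩ Estar s t P0) x y := by
  induction hr with
  | refl => exact fun _ _ _ => Iff.rfl
  | tail hr1 hstep ih =>
      intro j x y
      exact (step_conn_inter hg0 hm0 hr1 hstep j x y).trans (ih j x y)

end withMax

end NWT

theorem exists_two_spanning
    (hcut4 : ∀ Y : Finset Q, Y.Nonempty → Y ≠ Finset.univ →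
      4 ≤ (univ.filter (fun e => (s e ∈ Y ∧ t e ∉ Y) ∨ (t e ∈ Y ∧ s e ∉ Y))).card) :
    ∃ S1 S2 : Finset E, Disjoint S1 S2 ∧ (∀ u v : Q, conn s t S1 u v) ∧
      (∀ u v : Q, conn s t S2 u v) := by
  by_cases hQ : Nonempty Q
  swap
  · exact ⟨∅, ∅, Finset.disjoint_empty_left _, fun u => absurd ⟨u⟩ hQ,
      fun u => absurd ⟨u⟩ hQ⟩
  -- pick a maximal good pair
  have hne : (univ.filter (goodP s t) : Finset (Bool → Finset E)).Nonempty := by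
    refine ⟨fun _ => ∅, Finset.mem_filter.mpr ⟨Finset.mem_univ _, ?_⟩⟩
    exact ⟨isForest_empty, isForest_empty, Finset.disjoint_empty_left _⟩
  obtain ⟨P0, hP0mem, hP0max⟩ := Finset.exists_max_image _ wt hne
  have hg0 : goodP s t P0 := (Finset.mem_filter.mp hP0mem).2
  have hm0 : ∀ P, goodP s t P → wt P ≤ wt P0 := fun P hP =>
    hP0max P (Finset.mem_filter.mpr ⟨Finset.mem_univ _, hP⟩)
  have hone : ∀ i : Bool, ncomp s t (P0 i) = 1 := by
    by_contra hcon
    push_neg at hcon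
    obtain ⟨i, hi⟩ := hcon
    have hni : 2 ≤ ncomp s t (P0 i) := by
      have := ncomp_pos (s := s) (t := t) (S := P0 i) hQ
      omega
    set A := Estar s t P0 with hA
    set n := Fintype.card Q with hn
    have hreach0 : reach s t P0 P0 := Relation.ReflTransGen.refl
    have hAedge : ∀ e ∈ A, ∀ j : Bool, conn s t (P0 j ∩ A) (s e) (t e) := by
      intro e he j
      rw [hA, Estar, Finset.mem_filter] at he
      obtain ⟨_, P, hr, hfree⟩ := he
      have h1 := conn_inter_Estar hg0 hm0 hr hfree j
      exact (reach_conn_inter hg0 hm0 hr j _ _).mp h1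
    have hconnA_iff : ∀ (j : Bool) (x y : Q),
        conn s t A x y ↔ conn s t (P0 j ∩ A) x y := by
      intro j x y
      constructor
      · exact conn_le_edges (fun e he => hAedge e he j) x y
      · exact fun h => conn_mono Finset.inter_subset_right h
    set c := ncomp s t A with hc
    have hncompPA : ∀ j : Bool, ncomp s t (P0 j ∩ A) = c :=
      fun j => ncomp_congr (fun x y => (hconnA_iff j x y).symm)
    have hforestPA : ∀ j : Bool, isForest s t (P0 j ∩ A) :=
      fun j => isForest_subset _ (goodP_forest hg0 j) _ Finset.inter_subset_left
    have e1 : ∀ j : Bool, (P0 j ∩ A).card + c = n := by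
      intro j
      have := hforestPA j
      unfold isForest at this
      rw [hncompPA j] at this
      exact this
    have e3 : ∀ j : Bool, (P0 j ∩ A).card + (P0 j \ A).card = (P0 j).card :=
      fun j => Finset.card_inter_add_card_sdiff _ _
    have e5 : ∀ j : Bool, (P0 j).card + ncomp s t (P0 j) = n :=
      fun j => goodP_forest hg0 j
    have hcle : ∀ j : Bool, ncomp s t (P0 j) ≤ c := by
      intro j
      refine ncomp_le_of_conn_le (fun x y h => ?_)
      exact conn_mono Finset.inter_subset_left ((hconnA_iff j x y).mp h)
    have hc2 : 2 ≤ c := le_trans hni (hcle i)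
    set cross := (univ.filter (fun e => ¬ conn s t A (s e) (t e)) : Finset E) with hcross
    have hcrosssub : cross ⊆ (P0 true \ A) ∪ (P0 false \ A) := by
      intro e he
      rw [hcross, Finset.mem_filter] at he
      have henA : e ∉ A := fun hmem => he.2 (conn_edge hmem)
      have hP : e ∈ P0 true ∨ e ∈ P0 false := by
        by_contra hh
        push_neg at hh
        exact henA (mem_Estar_of_free hreach0 ⟨hh.1, hh.2⟩)
      rcases hP with h1 | h1
      · exact Finset.mem_union_left _ (Finset.mem_sdiff.mpr ⟨h1, henA⟩)
      · exact Finset.mem_union_right _ (Finset.mem_sdiff.mpr ⟨h1, henA⟩)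
    have hdisjsd : Disjoint (P0 true \ A) (P0 false \ A) :=
      Finset.disjoint_of_subset_left Finset.sdiff_subset
        (Finset.disjoint_of_subset_right Finset.sdiff_subset hg0.2.2)
    have hcross_le : cross.card ≤ (P0 true \ A).card + (P0 false \ A).card := by
      have := Finset.card_le_card hcrosssub
      rwa [Finset.card_union_of_disjoint hdisjsd] at this
    -- double counting over classes
    have key : ∀ e : E, ∑ C ∈ classes s t A,
        (if (s e ∈ C ∧ t e ∉ C) ∨ (t e ∈ C ∧ s e ∉ C) then 1 else 0) =
        if conn s t A (s e) (t e) then 0 else 2 := by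
      intro e
      rw [← Finset.card_filter]
      by_cases hce : conn s t A (s e) (t e)
      · rw [if_pos hce]
        rw [Finset.card_eq_zero, Finset.filter_eq_empty_iff]
        intro C hC
        rw [classes, Finset.mem_image] at hC
        obtain ⟨q, _, rfl⟩ := hC
        rintro (⟨h1, h2⟩ | ⟨h1, h2⟩)
        · exact h2 (mem_cls.mpr ((mem_cls.mp h1).trans hce))
        · exact h2 (mem_cls.mpr ((mem_cls.mp h1).trans (conn_symm hce)))
      · rw [if_neg hce]
        have hfe : (classes s t A).filter
            (fun C => (s e ∈ C ∧ t e ∉ C) ∨ (t e ∈ C ∧ s e ∉ C)) =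
            {cls s t A (s e), cls s t A (t e)} := by
          ext C
          simp only [Finset.mem_filter, Finset.mem_insert, Finset.mem_singleton]
          constructor
          · rintro ⟨hC, hpred⟩
            rw [classes, Finset.mem_image] at hC
            obtain ⟨q, _, rfl⟩ := hC
            rcases hpred with ⟨h1, h2⟩ | ⟨h1, h2⟩
            · exact Or.inl (cls_eq_cls.mpr (conn_symm (mem_cls.mp h1))).symm
            · exact Or.inr (cls_eq_cls.mpr (conn_symm (mem_cls.mp h1))).symm
          · rintro (rfl | rfl)
            · exact ⟨cls_mem_classes _ _, Or.inl ⟨cls_self _,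
                fun hmem => hce (mem_cls.mp hmem)⟩⟩
            · exact ⟨cls_mem_classes _ _, Or.inr ⟨cls_self _,
                fun hmem => hce (conn_symm (mem_cls.mp hmem))⟩⟩
        rw [hfe, Finset.card_pair (fun hh => hce (cls_eq_cls.mp hh))]
    have hdouble : ∑ C ∈ classes s t A,
        (univ.filter (fun e => (s e ∈ C ∧ t e ∉ C) ∨ (t e ∈ C ∧ s e ∉ C))).card =
        2 * cross.card := by
      calc ∑ C ∈ classes s t A,
            (univ.filter (fun e => (s e ∈ C ∧ t e ∉ C) ∨ (t e ∈ C ∧ s e ∉ C))).card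
          = ∑ C ∈ classes s t A, ∑ e ∈ univ,
            (if (s e ∈ C ∧ t e ∉ C) ∨ (t e ∈ C ∧ s e ∉ C) then 1 else 0) := by
            exact Finset.sum_congr rfl (fun C _ => Finset.card_filter _ _)
        _ = ∑ e ∈ univ, ∑ C ∈ classes s t A,
            (if (s e ∈ C ∧ t e ∉ C) ∨ (t e ∈ C ∧ s e ∉ C) then 1 else 0) :=
            Finset.sum_comm
        _ = ∑ e ∈ univ, (if conn s t A (s e) (t e) then 0 else 2) :=
            Finset.sum_congr rfl (fun e _ => key e)
        _ = 2 * cross.card := by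
            rw [hcross, Finset.card_filter, Finset.mul_sum]
            refine Finset.sum_congr rfl (fun e _ => ?_)
            by_cases hce : conn s t A (s e) (t e) <;> simp [hce]
    have hge : 4 * c ≤ 2 * cross.card := by
      rw [← hdouble]
      calc 4 * c = ∑ _C ∈ classes s t A, 4 := by
            rw [Finset.sum_const, smul_eq_mul]
            unfold c
            unfold ncomp
            ring
        _ ≤ _ := by
            refine Finset.sum_le_sum (fun C hC => ?_)
            have hCcls : ∃ q, C = cls s t A q := by
              rw [classes, Finset.mem_image] at hC
              obtain ⟨q, _, rfl⟩ := hC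
              exact ⟨q, rfl⟩
            obtain ⟨q, rfl⟩ := hCcls
            refine hcut4 _ ⟨q, cls_self q⟩ ?_
            -- properness from c ≥ 2
            intro huniv
            have h2 : 1 < (classes s t A).card := hc2
            obtain ⟨C1, h1, C2, h2', hne12⟩ := Finset.one_lt_card.mp h2
            have hCuniv : ∀ C' ∈ classes s t A, C' = cls s t A q := by
              intro C' hC'
              rw [classes, Finset.mem_image] at hC'
              obtain ⟨q', _, rfl⟩ := hC'
              have : q' ∈ cls s t A q := huniv ▸ Finset.mem_univ q'
              exact (cls_eq_cls.mpr (conn_symm (mem_cls.mp this))).symm ▸ rfl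
            exact hne12 ((hCuniv C1 h1).trans (hCuniv C2 h2').symm)
    have h23 : 3 ≤ ncomp s t (P0 true) + ncomp s t (P0 false) := by
      have p1 := ncomp_pos (s := s) (t := t) (S := P0 true) hQ
      have p2 := ncomp_pos (s := s) (t := t) (S := P0 false) hQ
      cases i
      · omega
      · omega
    have q1 := e1 true; have q2 := e1 false
    have q3 := e3 true; have q4 := e3 false
    have q5 := e5 true; have q6 := e5 false
    omega
  have hspan : ∀ i : Bool, ∀ u v : Q, conn s t (P0 i) u v := by
    intro i u v
    have h1 := hone i
    rw [ncomp, Finset.card_eq_one] at h1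
    obtain ⟨a, ha⟩ := h1
    have hu : cls s t (P0 i) u ∈ classes s t (P0 i) := cls_mem_classes _ _
    have hv : cls s t (P0 i) v ∈ classes s t (P0 i) := cls_mem_classes _ _
    rw [ha, Finset.mem_singleton] at hu hv
    exact cls_eq_cls.mp (hu.trans hv.symm)
  exact ⟨P0 true, P0 false, hg0.2.2, hspan true, hspan false⟩

section Parity

variable (s t) in
noncomputable def degp (S : Finset E) (q : Q) : ZMod 2 :=
  ∑ e ∈ S, ((if s e = q then 1 else 0) + (if t e = q then 1 else 0))

lemma zmod2_cases (z : ZMod 2) : z = 0 ∨ z = 1 := by revert z; decide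

lemma zmod2_add_self (z : ZMod 2) : z + z = 0 := by revert z; decide

lemma degp_insert {S : Finset E} {e : E} (he : e ∉ S) (q : Q) :
    degp s t (insert e S) q =
      degp s t S q + ((if s e = q then 1 else 0) + (if t e = q then 1 else 0)) := by
  rw [degp, Finset.sum_insert he, degp]; ring

lemma degp_erase {S : Finset E} {e : E} (he : e ∈ S) (q : Q) :
    degp s t (S.erase e) q =
      degp s t S q + ((if s e = q then 1 else 0) + (if t e = q then 1 else 0)) := by
  have h1 : degp s t (insert e (S.erase e)) q =
      degp s t (S.erase e) q + ((if s e = q then 1 else 0) + (if t e = q then 1 else 0)) :=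
    degp_insert (Finset.notMem_erase _ _) q
  rw [Finset.insert_erase he] at h1
  rw [h1, add_assoc, zmod2_add_self, add_zero]

lemma degp_union {S T : Finset E} (hd : Disjoint S T) (q : Q) :
    degp s t (S ∪ T) q = degp s t S q + degp s t T q := by
  rw [degp, Finset.sum_union hd, degp, degp]

lemma degp_total (T : Finset E) : ∑ q ∈ univ, degp s t T q = 0 := by
  unfold degp
  rw [Finset.sum_comm]
  refine Finset.sum_eq_zero (fun e _ => ?_)
  rw [Finset.sum_add_distrib, Finset.sum_ite_eq univ (s e) (fun _ => (1 : ZMod 2)),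
    Finset.sum_ite_eq univ (t e) (fun _ => (1 : ZMod 2))]
  simp only [Finset.mem_univ, if_true]
  decide

lemma tjoin : ∀ S : Finset E, ∀ w : Q → ZMod 2,
    (∀ q : Q, ∑ p ∈ cls s t S q, w p = 0) →
    ∃ J, J ⊆ S ∧ ∀ q, degp s t J q = w q := by
  intro S
  induction S using Finset.strongInduction with
  | _ S ih =>
    intro w hw
    by_cases hA : ∃ e ∈ S, conn s t (S.erase e) (s e) (t e)
    · obtain ⟨e, he, hce⟩ := hA
      have hiff : ∀ x y : Q, conn s t S x y ↔ conn s t (S.erase e) x y := by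
        intro x y
        have h1 := conn_insert_of_conn (a := e) (S := S.erase e) hce (x := x) (y := y)
        rwa [Finset.insert_erase he] at h1
      have hcls : ∀ q, cls s t (S.erase e) q = cls s t S q := by
        intro q; ext p; simp only [mem_cls]; exact (hiff q p).symm
      obtain ⟨J, hJsub, hJ⟩ := ih (S.erase e) (Finset.erase_ssubset he) w
        (fun q => by rw [hcls]; exact hw q)
      exact ⟨J, hJsub.trans (Finset.erase_subset _ _), hJ⟩
    · push_neg at hA
      rcases Finset.eq_empty_or_nonempty S with rfl | ⟨e, he⟩
      · refine ⟨∅, Finset.Subset.refl _, fun q => ?_⟩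
        have hcl : cls s t (∅ : Finset E) q = {q} := by
          ext p; simp only [mem_cls, Finset.mem_singleton]
          exact ⟨fun h => (conn_empty h).symm, fun h => h ▸ conn_refl _ _⟩
        have := hw q
        rw [hcl, Finset.sum_singleton] at this
        rw [degp, Finset.sum_empty, this]
      · have hbr := hA e he
        have hnl : s e ≠ t e := fun h => hbr (h ▸ conn_refl _ _)
        set S' := S.erase e with hS'
        set k := ∑ p ∈ cls s t S' (s e), w p with hk
        set w' := fun q => w q + (if q = s e ∨ q = t e then k else 0) with hw'def
        have hSins : insert e S' = S := Finset.insert_erase he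
        have hconnS : ∀ x y : Q, conn s t S x y ↔
            (conn s t S' x y ∨ (conn s t S' x (s e) ∧ conn s t S' (t e) y) ∨
              (conn s t S' x (t e) ∧ conn s t S' (s e) y)) := by
          intro x y
          rw [← hSins]
          exact conn_insert
        have hndis : ∀ p : Q, ¬ (conn s t S' (s e) p ∧ conn s t S' (t e) p) := by
          rintro p ⟨h1, h2⟩
          exact hbr (h1.trans (conn_symm h2))
        have hclssplit : cls s t S (s e) = cls s t S' (s e) ∪ cls s t S' (t e) := by
          ext p
          simp only [mem_cls, Finset.mem_union, hconnS]
          constructor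
          · rintro (h1 | ⟨h1, h2⟩ | ⟨h1, h2⟩)
            · exact Or.inl h1
            · exact Or.inr h2
            · exact absurd h1 (fun hh => hbr hh)
          · rintro (h1 | h1)
            · exact Or.inl h1
            · exact Or.inr (Or.inl ⟨conn_refl _ _, h1⟩)
        have hdisjcls : Disjoint (cls s t S' (s e)) (cls s t S' (t e)) := by
          rw [Finset.disjoint_left]
          intro p h1 h2
          exact hndis p ⟨mem_cls.mp h1, mem_cls.mp h2⟩
        have hsum_split := hw (s e)
        rw [hclssplit, Finset.sum_union hdisjcls] at hsum_split
        -- ∑ over cls S' (t e) of w = k   (since k + m = 0 in ZMod 2)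
        have hm : ∑ p ∈ cls s t S' (t e), w p = k := by
          have h2 := zmod2_add_self k
          have h3 := congrArg (fun z => k + z) hsum_split
          beta_reduce at h3
          rw [← add_assoc, h2, zero_add, add_zero] at h3
          exact h3
        have hindthere : ∀ (z : Q) (hz : z = s e ∨ z = t e) (C : Finset Q),
            z ∈ C → (∀ p ∈ C, p ≠ z → ¬(p = s e ∨ p = t e)) →
            ∑ p ∈ C, (if p = s e ∨ p = t e then k else 0) = k := by
          intro z hz C hzC hother
          rw [Finset.sum_eq_single_of_mem z hzC]
          · rw [if_pos hz]
          · intro p hp hpz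
            rw [if_neg (hother p hp hpz)]
        have hw'sum : ∀ q : Q, ∑ p ∈ cls s t S' q, w' p = 0 := by
          intro q
          have hsplitsum : ∀ C : Finset Q,
              ∑ p ∈ C, w' p = ∑ p ∈ C, w p + ∑ p ∈ C, (if p = s e ∨ p = t e then k else 0) := by
            intro C
            rw [hw'def, ← Finset.sum_add_distrib]
          by_cases hq1 : conn s t S' q (s e)
          · have hcq : cls s t S' q = cls s t S' (s e) := cls_eq_cls.mpr hq1
            rw [hcq, hsplitsum]
            rw [hindthere (s e) (Or.inl rfl) _ (cls_self _) ?_]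
            · rw [← hk, zmod2_add_self]
            · rintro p hp hpz (rfl | rfl)
              · exact hpz rfl
              · exact hndis _ ⟨mem_cls.mp hp, conn_refl _ _⟩
          · by_cases hq2 : conn s t S' q (t e)
            · have hcq : cls s t S' q = cls s t S' (t e) := cls_eq_cls.mpr hq2
              rw [hcq, hsplitsum]
              rw [hindthere (t e) (Or.inr rfl) _ (cls_self _) ?_]
              · rw [hm, zmod2_add_self]
              · rintro p hp hpz (rfl | rfl)
                · exact hndis _ ⟨conn_refl _ _, mem_cls.mp hp⟩
                · exact hpz rfl
            · -- class untouched
              have hcq : cls s t S' q = cls s t S q := by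
                ext p
                simp only [mem_cls, hconnS]
                constructor
                · exact Or.inl
                · rintro (h1 | ⟨h1, h2⟩ | ⟨h1, h2⟩)
                  · exact h1
                  · exact absurd h1 hq1
                  · exact absurd h1 hq2
              rw [hsplitsum]
              have hzero : ∑ p ∈ cls s t S' q, (if p = s e ∨ p = t e then k else 0) = 0 := by
                refine Finset.sum_eq_zero (fun p hp => ?_)
                rw [if_neg]
                rintro (rfl | rfl)
                · exact hq1 (mem_cls.mp hp)
                · exact hq2 (mem_cls.mp hp)
              rw [hzero, add_zero, hcq]
              exact hw q
        obtain ⟨J', hJ'sub, hJ'⟩ := ih S' (Finset.erase_ssubset he) w' hw'sum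
        have heJ' : e ∉ J' := fun h => Finset.notMem_erase _ _ (hJ'sub h)
        rcases zmod2_cases k with hk0 | hk1
        · refine ⟨J', hJ'sub.trans (Finset.erase_subset _ _), fun q => ?_⟩
          rw [hJ' q]
          simp only [hw'def, hk0, ite_self, add_zero]
        · refine ⟨insert e J', Finset.insert_subset he
            (hJ'sub.trans (Finset.erase_subset _ _)), fun q => ?_⟩
          rw [degp_insert heJ', hJ' q]
          simp only [hw'def]
          by_cases hq1 : q = s e
          · subst hq1
            rw [if_pos (Or.inl rfl), hk1, if_pos rfl, if_neg (fun h => hnl h.symm),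
              add_zero, add_assoc, zmod2_add_self, add_zero]
          · by_cases hq2 : q = t e
            · subst hq2
              rw [if_pos (Or.inr rfl), hk1, if_neg (fun h => hnl h), if_pos rfl,
                zero_add, add_assoc, zmod2_add_self, add_zero]
            · rw [if_neg (fun h => h.elim hq1 hq2), add_zero,
                if_neg (fun h => hq1 h.symm), if_neg (fun h => hq2 h.symm), add_zero,
                add_zero]

end Parity

section Orient

variable (s t) in
def edge1 (e : E) (q : Q) : ℤ := (if q = s e then 1 else 0) - (if q = t e then 1 else 0)

variable (s t) in
noncomputable def divg (g : E → ℤ) (q : Q) : ℤ := ∑ e ∈ univ, g e * edge1 s t e q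

lemma divg_update_zero {g : E → ℤ} {e : E} (hge : g e = 0) (v : ℤ) (q : Q) :
    divg s t (Function.update g e v) q = divg s t g q + v * edge1 s t e q := by
  unfold divg
  have hLHS := Finset.sum_erase_add univ
    (fun x => Function.update g e v x * edge1 s t x q) (Finset.mem_univ e)
  have hRHS := Finset.sum_erase_add univ (fun x => g x * edge1 s t x q) (Finset.mem_univ e)
  have h1 : ∑ x ∈ univ.erase e, Function.update g e v x * edge1 s t x q
      = ∑ x ∈ univ.erase e, g x * edge1 s t x q :=
    Finset.sum_congr rfl (fun x hx => by
      rw [Function.update_of_ne (Finset.mem_erase.mp hx).1])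
  rw [← hLHS, ← hRHS, h1]
  simp only [Function.update_self, hge, zero_mul, add_zero]


lemma ind_split {x y : Q} (hxy : x ≠ y) (q : Q) :
    (if x = q then (1:ZMod 2) else 0) + (if y = q then 1 else 0) =
      if q = x ∨ q = y then 1 else 0 := by
  by_cases h1 : q = x
  · subst h1
    rw [if_pos rfl, if_neg (fun h => hxy h.symm), if_pos (Or.inl rfl)]
    decide
  · by_cases h2 : q = y
    · subst h2
      rw [if_neg (fun h => h1 h.symm), if_pos rfl, if_pos (Or.inr rfl)]
      decide
    · rw [if_neg (fun h => h1 h.symm), if_neg (fun h => h2 h.symm),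
        if_neg (fun h => h.elim h1 h2), add_zero]

lemma ind_shift {a b c : Q} (hab : a ≠ b) (hca : c ≠ a) (hcb : c ≠ b) (q : Q) :
    (if q = a ∨ q = b then (1:ZMod 2) else 0) +
        ((if a = q then 1 else 0) + (if c = q then 1 else 0)) =
      if q = c ∨ q = b then 1 else 0 := by
  by_cases h1 : q = a
  · subst h1
    rw [if_pos (Or.inl rfl), if_pos rfl, if_neg (fun h => hca h),
      if_neg (fun h => h.elim (fun h' => hca h'.symm) (fun h' => hab h'))]
    decide
  · by_cases h2 : q = b
    · subst h2
      rw [if_pos (Or.inr rfl), if_neg (fun h => h1 h.symm), if_neg (fun h => hcb h),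
        if_pos (Or.inr rfl)]
      decide
    · by_cases h3 : q = c
      · subst h3
        rw [if_neg (fun h => h.elim h1 h2), if_neg (fun h => h1 h.symm), if_pos rfl,
          if_pos (Or.inl rfl)]
        decide
      · rw [if_neg (fun h => h.elim h1 h2), if_neg (fun h => h1 h.symm),
          if_neg (fun h => h3 h.symm), if_neg (fun h => h.elim h3 h2)]
        decide

lemma orient_both : ∀ D : Finset E,
    ((∀ q, degp s t D q = 0) →
      ∃ g : E → ℤ, (∀ e ∈ D, g e = 1 ∨ g e = -1) ∧ (∀ e, e ∉ D → g e = 0) ∧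
        ∀ q, divg s t g q = 0) ∧
    (∀ a b : Q, a ≠ b → (∀ q, degp s t D q = if q = a ∨ q = b then 1 else 0) →
      ∃ g : E → ℤ, (∀ e ∈ D, g e = 1 ∨ g e = -1) ∧ (∀ e, e ∉ D → g e = 0) ∧
        ∀ q, divg s t g q = (if q = b then 1 else 0) - (if q = a then 1 else 0)) := by
  intro D
  induction D using Finset.strongInduction with
  | _ D ih =>
    have hupd : ∀ (g' : E → ℤ) (e : E) (v : ℤ), v = 1 ∨ v = -1 →
        (∀ e' ∈ D.erase e, g' e' = 1 ∨ g' e' = -1) →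
        (∀ e', e' ∉ D.erase e → g' e' = 0) → e ∈ D →
        (∀ e' ∈ D, Function.update g' e v e' = 1 ∨ Function.update g' e v e' = -1) ∧
        (∀ e', e' ∉ D → Function.update g' e v e' = 0) := by
      intro g' e v hv hg1 hg2 heD
      constructor
      · intro e' he'
        by_cases hee : e' = e
        · subst hee; rw [Function.update_self]; exact hv
        · rw [Function.update_of_ne hee]
          exact hg1 e' (Finset.mem_erase.mpr ⟨hee, he'⟩)
      · intro e' he'
        have hee : e' ≠ e := fun h => he' (h ▸ heD)
        rw [Function.update_of_ne hee]
        exact hg2 e' (fun hh => he' (Finset.mem_of_mem_erase hh))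
    constructor
    · -- even case
      intro hdeg
      rcases Finset.eq_empty_or_nonempty D with rfl | ⟨e, he⟩
      · refine ⟨fun _ => 0, by simp, fun _ _ => rfl, fun q => ?_⟩
        unfold divg; simp
      · have hssub := Finset.erase_ssubset he
        have hde := fun q => degp_erase (s := s) (t := t) he q
        have hnotin := Finset.notMem_erase e D
        by_cases hl : s e = t e
        · have hdeg' : ∀ q, degp s t (D.erase e) q = 0 := by
            intro q
            rw [hde q, hdeg q, zero_add, hl, zmod2_add_self]
          obtain ⟨g', hg1, hg2, hg3⟩ := (ih _ hssub).1 hdeg'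
          have hge : g' e = 0 := hg2 e hnotin
          obtain ⟨p1, p2⟩ := hupd g' e 1 (Or.inl rfl) hg1 hg2 he
          refine ⟨Function.update g' e 1, p1, p2, fun q => ?_⟩
          rw [divg_update_zero hge, hg3 q, zero_add, one_mul]
          unfold edge1
          rw [hl]; ring
        · have hdeg' : ∀ q, degp s t (D.erase e) q =
              if q = s e ∨ q = t e then 1 else 0 := by
            intro q
            rw [hde q, hdeg q, zero_add]
            exact ind_split hl q
          obtain ⟨g', hg1, hg2, hg3⟩ := (ih _ hssub).2 (s e) (t e) hl hdeg'
          have hge : g' e = 0 := hg2 e hnotin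
          obtain ⟨p1, p2⟩ := hupd g' e 1 (Or.inl rfl) hg1 hg2 he
          refine ⟨Function.update g' e 1, p1, p2, fun q => ?_⟩
          rw [divg_update_zero hge, hg3 q, one_mul]
          unfold edge1
          ring
    · -- odd case
      intro a b hab hdeg
      rcases Finset.eq_empty_or_nonempty D with rfl | hne
      · exfalso
        have h := hdeg a
        rw [if_pos (Or.inl rfl)] at h
        unfold degp at h
        rw [Finset.sum_empty] at h
        exact absurd h (by decide)
      have hex : ∃ e ∈ D, s e = a ∨ t e = a := by
        by_contra hcon
        push_neg at hcon
        have hz : degp s t D a = 0 := by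
          unfold degp
          refine Finset.sum_eq_zero (fun e heD => ?_)
          rw [if_neg ((hcon e heD).1), if_neg ((hcon e heD).2), add_zero]
        have h := (hdeg a).symm.trans hz
        rw [if_pos (Or.inl rfl)] at h
        exact absurd h (by decide)
      obtain ⟨e, he, hinc⟩ := hex
      have hssub := Finset.erase_ssubset he
      have hde := fun q => degp_erase (s := s) (t := t) he q
      have hnotin := Finset.notMem_erase e D
      by_cases hloop : s e = t e
      · have hsea : s e = a := by
          rcases hinc with h | h
          · exact h
          · exact hloop.trans h
        have htea : t e = a := hloop ▸ hsea
        have hdeg' : ∀ q, degp s t (D.erase e) q = if q = a ∨ q = b then 1 else 0 := by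
          intro q
          rw [hde q, hdeg q, hloop, zmod2_add_self, add_zero]
        obtain ⟨g', hg1, hg2, hg3⟩ := (ih _ hssub).2 a b hab hdeg'
        have hge : g' e = 0 := hg2 e hnotin
        obtain ⟨p1, p2⟩ := hupd g' e 1 (Or.inl rfl) hg1 hg2 he
        refine ⟨Function.update g' e 1, p1, p2, fun q => ?_⟩
        rw [divg_update_zero hge, hg3 q, one_mul]
        unfold edge1
        rw [hloop]; ring
      · rcases hinc with hsea | htea
        · -- s e = a
          have hca : t e ≠ a := fun h => hloop (hsea.trans h.symm)
          by_cases hcb : t e = b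
          · have hdeg' : ∀ q, degp s t (D.erase e) q = 0 := by
              intro q
              rw [hde q, hdeg q, hsea, hcb, ind_split hab q, zmod2_add_self]
            obtain ⟨g', hg1, hg2, hg3⟩ := (ih _ hssub).1 hdeg'
            have hge : g' e = 0 := hg2 e hnotin
            obtain ⟨p1, p2⟩ := hupd g' e (-1) (Or.inr rfl) hg1 hg2 he
            refine ⟨Function.update g' e (-1), p1, p2, fun q => ?_⟩
            rw [divg_update_zero hge, hg3 q, zero_add]
            unfold edge1
            rw [hsea, hcb]; ring
          · have hdeg' : ∀ q, degp s t (D.erase e) q =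
                if q = t e ∨ q = b then 1 else 0 := by
              intro q
              rw [hde q, hdeg q, hsea]
              exact ind_shift hab hca hcb q
            obtain ⟨g', hg1, hg2, hg3⟩ := (ih _ hssub).2 (t e) b hcb hdeg'
            have hge : g' e = 0 := hg2 e hnotin
            obtain ⟨p1, p2⟩ := hupd g' e (-1) (Or.inr rfl) hg1 hg2 he
            refine ⟨Function.update g' e (-1), p1, p2, fun q => ?_⟩
            rw [divg_update_zero hge, hg3 q]
            unfold edge1
            rw [hsea]; ring
        · -- t e = a
          have hca : s e ≠ a := fun h => hloop (h.trans htea.symm)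
          by_cases hcb : s e = b
          · have hdeg' : ∀ q, degp s t (D.erase e) q = 0 := by
              intro q
              rw [hde q, hdeg q, htea, hcb,
                add_comm (if b = q then (1:ZMod 2) else 0) (if a = q then 1 else 0),
                ind_split hab q, zmod2_add_self]
            obtain ⟨g', hg1, hg2, hg3⟩ := (ih _ hssub).1 hdeg'
            have hge : g' e = 0 := hg2 e hnotin
            obtain ⟨p1, p2⟩ := hupd g' e 1 (Or.inl rfl) hg1 hg2 he
            refine ⟨Function.update g' e 1, p1, p2, fun q => ?_⟩
            rw [divg_update_zero hge, hg3 q, zero_add, one_mul]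
            unfold edge1
            rw [htea, hcb]
          · have hdeg' : ∀ q, degp s t (D.erase e) q =
                if q = s e ∨ q = b then 1 else 0 := by
              intro q
              rw [hde q, hdeg q, htea,
                add_comm (if s e = q then (1:ZMod 2) else 0) (if a = q then 1 else 0)]
              exact ind_shift hab hca hcb q
            obtain ⟨g', hg1, hg2, hg3⟩ := (ih _ hssub).2 (s e) b hcb hdeg'
            have hge : g' e = 0 := hg2 e hnotin
            obtain ⟨p1, p2⟩ := hupd g' e 1 (Or.inl rfl) hg1 hg2 he
            refine ⟨Function.update g' e 1, p1, p2, fun q => ?_⟩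
            rw [divg_update_zero hge, hg3 q, one_mul]
            unfold edge1
            rw [htea]; ring

end Orient

section FinFlow

lemma mk_even_flow (S : Finset E) (hsp : ∀ u v : Q, conn s t S u v) :
    ∃ f : E → ℤ, (∀ e ∈ univ \ S, f e = 1 ∨ f e = -1) ∧
      (∀ e, f e = 0 ∨ f e = 1 ∨ f e = -1) ∧ (∀ q, divg s t f q = 0) := by
  set w : Q → ZMod 2 := fun q => degp s t (univ \ S) q with hw
  have hwsum : ∀ q : Q, ∑ p ∈ cls s t S q, w p = 0 := by
    intro q
    have hcls : cls s t S q = univ := by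
      ext p
      simp [mem_cls, hsp q p]
    rw [hcls, hw]
    exact degp_total _
  obtain ⟨J, hJsub, hJ⟩ := tjoin S w hwsum
  have hdisj : Disjoint (univ \ S) J :=
    Finset.disjoint_of_subset_right hJsub Finset.sdiff_disjoint
  have hdeg : ∀ q, degp s t ((univ \ S) ∪ J) q = 0 := by
    intro q
    rw [degp_union hdisj, hJ q, hw]
    exact zmod2_add_self _
  obtain ⟨g, hg1, hg2, hg3⟩ := (orient_both _).1 hdeg
  refine ⟨g, fun e he => hg1 e (Finset.mem_union_left _ he), fun e => ?_, hg3⟩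
  by_cases heD : e ∈ (univ \ S) ∪ J
  · rcases hg1 e heD with h | h
    · exact Or.inr (Or.inl h)
    · exact Or.inr (Or.inr h)
  · exact Or.inl (hg2 e heD)

theorem finFlow
    (hcut4 : ∀ Y : Finset Q, Y.Nonempty → Y ≠ Finset.univ →
      4 ≤ (univ.filter (fun e => (s e ∈ Y ∧ t e ∉ Y) ∨ (t e ∈ Y ∧ s e ∉ Y))).card) :
    ∃ g : E → ℤ, (∀ e, g e ≠ 0 ∧ |g e| ≤ 3) ∧ ∀ q, divg s t g q = 0 := by
  obtain ⟨S1, S2, hdisj, hsp1, hsp2⟩ := exists_two_spanning hcut4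
  obtain ⟨f1, hf1a, hf1b, hf1c⟩ := mk_even_flow S1 hsp1
  obtain ⟨f2, hf2a, hf2b, hf2c⟩ := mk_even_flow S2 hsp2
  refine ⟨fun e => f1 e + 2 * f2 e, fun e => ?_, fun q => ?_⟩
  · have hcase : e ∈ univ \ S1 ∨ e ∈ univ \ S2 := by
      by_cases h1 : e ∈ S1
      · exact Or.inr (Finset.mem_sdiff.mpr
          ⟨Finset.mem_univ _, Finset.disjoint_left.mp hdisj h1⟩)
      · exact Or.inl (Finset.mem_sdiff.mpr ⟨Finset.mem_univ _, h1⟩)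
    show f1 e + 2 * f2 e ≠ 0 ∧ |f1 e + 2 * f2 e| ≤ 3
    rcases hcase with h | h
    · rcases hf1a e h with h1 | h1 <;> rcases hf2b e with h2 | h2 | h2 <;>
        rw [h1, h2] <;> norm_num
    · rcases hf2a e h with h2 | h2 <;> rcases hf1b e with h1 | h1 | h1 <;>
        rw [h1, h2] <;> norm_num
  · have hthis : ∀ e, (f1 e + 2 * f2 e) * edge1 s t e q
        = f1 e * edge1 s t e q + 2 * (f2 e * edge1 s t e q) := fun e => by ring
    have hbeta : divg s t (fun e => f1 e + 2 * f2 e) q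
        = ∑ e ∈ univ, (f1 e + 2 * f2 e) * edge1 s t e q := rfl
    rw [hbeta, Finset.sum_congr rfl (fun e _ => hthis e), Finset.sum_add_distrib,
      ← Finset.mul_sum]
    have h1 := hf1c q
    have h2 := hf2c q
    unfold divg at h1 h2
    rw [h1, h2, mul_zero, add_zero]

lemma cut_sum {g : E → ℤ} (hdiv : ∀ q, divg s t g q = 0) (Y : Finset Q) :
    ∑ e ∈ univ.filter (fun e => s e ∈ Y ∧ t e ∉ Y), g e
      - ∑ e ∈ univ.filter (fun e => t e ∈ Y ∧ s e ∉ Y), g e = 0 := by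
  have h0 : ∑ q ∈ Y, divg s t g q = 0 := Finset.sum_eq_zero (fun q _ => hdiv q)
  unfold divg at h0
  rw [Finset.sum_comm] at h0
  have hInner : ∀ e : E, ∑ q ∈ Y, g e * edge1 s t e q
      = g e * ((if s e ∈ Y then 1 else 0) - (if t e ∈ Y then 1 else 0)) := by
    intro e
    rw [← Finset.mul_sum]
    congr 1
    unfold edge1
    rw [Finset.sum_sub_distrib]
    congr 1
    · exact Finset.sum_ite_eq' Y (s e) (fun _ => (1 : ℤ))
    · exact Finset.sum_ite_eq' Y (t e) (fun _ => (1 : ℤ))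
  rw [Finset.sum_congr rfl (fun e _ => hInner e)] at h0
  have hsplit : ∀ e : E, g e * ((if s e ∈ Y then 1 else 0) - (if t e ∈ Y then 1 else 0))
      = (if s e ∈ Y ∧ t e ∉ Y then g e else 0) - (if t e ∈ Y ∧ s e ∉ Y then g e else 0) := by
    intro e
    by_cases h1 : s e ∈ Y <;> by_cases h2 : t e ∈ Y <;> simp [h1, h2]
  rw [Finset.sum_congr rfl (fun e _ => hsplit e), Finset.sum_sub_distrib] at h0
  rw [Finset.sum_filter, Finset.sum_filter]
  exact h0

end FinFlow

end Flow4

/-- The oriented edges of `G` crossing from `X` to its complement. -/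
def orientedCut {V : Type*} (G : SimpleGraph V) (X : Set V) : Set (V × V) :=
  {p | G.Adj p.1 p.2 ∧ p.1 ∈ X ∧ p.2 ∉ X}

/-- The (unoriented) edges of `G` crossing between `X` and its complement. -/
def edgeCut {V : Type*} (G : SimpleGraph V) (X : Set V) : Set (Sym2 V) :=
  {e | ∃ x y, G.Adj x y ∧ x ∈ X ∧ y ∉ X ∧ e = s(x, y)}

namespace Flow4App
open scoped Classical
open Finset

def KK : Type := {z : ℤ // z ∈ Finset.Icc (-3 : ℤ) 3}

noncomputable instance : Fintype KK := by unfold KK; infer_instance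
instance : Finite KK := by unfold KK; infer_instance
instance : TopologicalSpace KK := ⊥
instance : DiscreteTopology KK := ⟨rfl⟩
instance : CompactSpace KK := Finite.compactSpace

def mkK (z : ℤ) (h : -3 ≤ z ∧ z ≤ 3) : KK := ⟨z, Finset.mem_Icc.mpr h⟩

@[simp] lemma mkK_val (z : ℤ) (h : -3 ≤ z ∧ z ≤ 3) : (mkK z h).1 = z := rfl

lemma KK_bounds (k : KK) : -3 ≤ k.1 ∧ k.1 ≤ 3 := Finset.mem_Icc.mp k.2

variable {V : Type*}

lemma edgeCut_finite {G : SimpleGraph V} {X : Set V} (h : (orientedCut G X).Finite) :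
    (edgeCut G X).Finite := by
  have himg : edgeCut G X = (fun p : V × V => s(p.1, p.2)) '' orientedCut G X := by
    ext m
    simp only [edgeCut, orientedCut, Set.mem_image, Set.mem_setOf_eq, Prod.exists]
    constructor
    · rintro ⟨x, y, h1, h2, h3, rfl⟩; exact ⟨x, y, ⟨h1, h2, h3⟩, rfl⟩
    · rintro ⟨x, y, ⟨h1, h2, h3⟩, rfl⟩; exact ⟨x, y, h1, h2, h3, rfl⟩
  rw [himg]
  exact h.image _

def goodLoc (G : SimpleGraph V) (f : V × V → KK) (pr : V × V) : Prop :=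
  (G.Adj pr.1 pr.2 → (f pr).1 ≠ 0) ∧ ((f (pr.2, pr.1)).1 = - (f pr).1) ∧
    (¬ G.Adj pr.1 pr.2 → (f pr).1 = 0)

def ZSet (G : SimpleGraph V) (X : Set V) : Set ((V × V) → KK) :=
  {f | (∀ pr : V × V, goodLoc G f pr) ∧
    ((orientedCut G X).Finite → ∑ᶠ p ∈ orientedCut G X, ((f p).1 : ℤ) = 0)}

lemma closed_cyl {ι : Type*} (I : Set ι) (hI : I.Finite) (P : (ι → KK) → Prop)
    (hP : ∀ f g, (∀ i ∈ I, f i = g i) → P f → P g) : IsClosed {f | P f} := by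
  haveI : Finite ↥I := hI
  have hres : Continuous (fun (f : ι → KK) (i : I) => f i.1) :=
    continuous_pi (fun i => continuous_apply i.1)
  have heq : {f : ι → KK | P f} =
      (fun (f : ι → KK) (i : I) => f i.1) ⁻¹'
        ((fun (f : ι → KK) (i : I) => f i.1) '' {f | P f}) := by
    apply Set.Subset.antisymm
    · exact Set.subset_preimage_image _ _
    · rintro f ⟨g, hg, hfg⟩
      exact hP g f (fun i hi => congrFun hfg ⟨i, hi⟩) hg
  rw [heq]
  exact (isClosed_discrete _).preimage hres

lemma ZSet_closed (G : SimpleGraph V) (X : Set V) : IsClosed (ZSet G X) := by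
  have h1 : IsClosed {f : V × V → KK | ∀ pr : V × V, goodLoc G f pr} := by
    have heq : {f : V × V → KK | ∀ pr : V × V, goodLoc G f pr} =
        ⋂ pr : V × V, {f | goodLoc G f pr} := by
      ext f; simp only [Set.mem_setOf_eq, Set.mem_iInter]
    rw [heq]
    refine isClosed_iInter (fun pr => ?_)
    refine closed_cyl {pr, (pr.2, pr.1)} ((Set.finite_singleton _).insert _) _ ?_
    intro f g hagree hf
    have e1 : f pr = g pr := hagree pr (Set.mem_insert _ _)
    have e2 : f (pr.2, pr.1) = g (pr.2, pr.1) :=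
      hagree _ (Set.mem_insert_of_mem _ rfl)
    unfold goodLoc at hf ⊢
    rw [← e1, ← e2]
    exact hf
  have h2 : IsClosed {f : V × V → KK | (orientedCut G X).Finite →
      ∑ᶠ p ∈ orientedCut G X, ((f p).1 : ℤ) = 0} := by
    by_cases hfin : (orientedCut G X).Finite
    · refine closed_cyl (orientedCut G X) hfin _ ?_
      intro f g hagree hf _
      have hsum : ∑ᶠ p ∈ orientedCut G X, ((g p).1 : ℤ)
          = ∑ᶠ p ∈ orientedCut G X, ((f p).1 : ℤ) :=
        finsum_mem_congr rfl (fun x hx => by rw [hagree x hx])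
      rw [hsum]
      exact hf hfin
    · have heq : {f : V × V → KK | (orientedCut G X).Finite →
          ∑ᶠ p ∈ orientedCut G X, ((f p).1 : ℤ) = 0} = Set.univ := by
        ext f
        simp [hfin]
      rw [heq]
      exact isClosed_univ
  have heq : ZSet G X = {f : V × V → KK | ∀ pr : V × V, goodLoc G f pr} ∩
      {f : V × V → KK | (orientedCut G X).Finite →
        ∑ᶠ p ∈ orientedCut G X, ((f p).1 : ℤ) = 0} := rfl
  rw [heq]
  exact h1.inter h2

end Flow4App


namespace Flow4App
open scoped Classical
open Finset

variable {V : Type*}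

lemma fip (G : SimpleGraph V)
    (hconn : ∀ X : Set V, X.Nonempty → Xᶜ.Nonempty →
      (edgeCut G X).Infinite ∨ 4 ≤ (edgeCut G X).ncard)
    (T : Finset (Set V)) : ∃ f : (V × V) → KK, f ∈ ⋂ X ∈ T, ZSet G X := by
  classical
  set 𝒞 : Finset (Set V) := T.filter (fun X => (orientedCut G X).Finite) with h𝒞
  have hcutfin : ∀ X ∈ 𝒞, (orientedCut G X).Finite := fun X hX =>
    (Finset.mem_filter.mp hX).2
  set EH : Set (Sym2 V) := ⋃ X ∈ (𝒞 : Set (Set V)), edgeCut G X with hEH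
  have hEHfin : EH.Finite := Set.Finite.biUnion (Finset.finite_toSet _)
    (fun X hX => edgeCut_finite (hcutfin X (Finset.mem_coe.mp hX)))
  haveI : Fintype ↥EH := hEHfin.fintype
  haveI : DecidableEq ↥EH := Classical.decEq _
  set code : V → (↥𝒞 → Bool) := fun v C => if v ∈ C.1 then true else false with hcode
  haveI : Fintype ↥𝒞 := inferInstance
  set Q := {q : ↥𝒞 → Bool // q ∈ Set.range code} with hQdef
  haveI : Fintype Q := Subtype.fintype _
  haveI : DecidableEq Q := Classical.decEq _
  have hXsubEH : ∀ X ∈ 𝒞, edgeCut G X ⊆ EH := by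
    intro X hX m hm
    rw [hEH]
    exact Set.mem_biUnion (Finset.mem_coe.mpr hX) hm
  -- choose representatives
  have hPex : ∀ e : ↥EH, ∃ pr : V × V, G.Adj pr.1 pr.2 ∧ s(pr.1, pr.2) = e.1 := by
    rintro ⟨m, hm⟩
    rw [hEH] at hm
    simp only [Set.mem_iUnion] at hm
    obtain ⟨X, _, hmX⟩ := hm
    obtain ⟨x, y, hadjxy, _, _, rfl⟩ := hmX
    exact ⟨(x, y), hadjxy, rfl⟩
  choose rep hadj hrep using hPex
  set sQ : ↥EH → Q := fun e => ⟨code (rep e).1, ⟨(rep e).1, rfl⟩⟩ with hsQ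
  set tQ : ↥EH → Q := fun e => ⟨code (rep e).2, ⟨(rep e).2, rfl⟩⟩ with htQ
  have hcodeX : ∀ (v : V) (C : ↥𝒞), code v C = true ↔ v ∈ C.1 := by
    intro v C
    rw [hcode]
    by_cases h : v ∈ C.1 <;> simp [h]
  -- the contracted multigraph is 4-edge-connected
  have hcut4 : ∀ Y : Finset Q, Y.Nonempty → Y ≠ Finset.univ →
      4 ≤ (Finset.univ.filter
        (fun e => (sQ e ∈ Y ∧ tQ e ∉ Y) ∨ (tQ e ∈ Y ∧ sQ e ∉ Y))).card := by
    intro Y hYne hYuniv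
    set X₀ : Set V := {v : V | (⟨code v, ⟨v, rfl⟩⟩ : Q) ∈ Y} with hX₀
    have hX₀mem : ∀ v : V, v ∈ X₀ ↔ (⟨code v, ⟨v, rfl⟩⟩ : Q) ∈ Y := fun v => Iff.rfl
    obtain ⟨q0, hq0⟩ := hYne
    obtain ⟨v0, hv0⟩ := q0.2
    have hv0X : v0 ∈ X₀ := by
      rw [hX₀mem]
      rw [show (⟨code v0, ⟨v0, rfl⟩⟩ : Q) = q0 from Subtype.ext hv0]
      exact hq0
    obtain ⟨q1, hq1⟩ : ∃ q : Q, q ∉ Y := by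
      by_contra hall
      push_neg at hall
      exact hYuniv (Finset.eq_univ_iff_forall.mpr hall)
    obtain ⟨v1, hv1⟩ := q1.2
    have hv1X : v1 ∈ X₀ᶜ := by
      intro hmem
      apply hq1
      rw [hX₀mem] at hmem
      rwa [show (⟨code v1, ⟨v1, rfl⟩⟩ : Q) = q1 from Subtype.ext hv1] at hmem
    have hsub : edgeCut G X₀ ⊆ EH := by
      rintro m ⟨x, y, hadjxy, hx, hy, rfl⟩
      have hne_code : code x ≠ code y := by
        intro hxy
        apply hy
        rw [hX₀mem] at hx ⊢
        rwa [show (⟨code y, ⟨y, rfl⟩⟩ : Q) = ⟨code x, ⟨x, rfl⟩⟩ from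
          Subtype.ext hxy.symm]
      obtain ⟨C, hC⟩ : ∃ C : ↥𝒞, code x C ≠ code y C := by
        by_contra hall
        push_neg at hall
        exact hne_code (funext hall)
      have hxyC : (x ∈ C.1 ∧ y ∉ C.1) ∨ (y ∈ C.1 ∧ x ∉ C.1) := by
        by_cases hxC : x ∈ C.1 <;> by_cases hyC : y ∈ C.1
        · exact absurd (by rw [hcode]; simp [hxC, hyC]) hC
        · exact Or.inl ⟨hxC, hyC⟩
        · exact Or.inr ⟨hyC, hxC⟩
        · exact absurd (by rw [hcode]; simp [hxC, hyC]) hC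
      refine hXsubEH C.1 C.2 ?_
      rcases hxyC with ⟨h1, h2⟩ | ⟨h1, h2⟩
      · exact ⟨x, y, hadjxy, h1, h2, rfl⟩
      · exact ⟨y, x, hadjxy.symm, h1, h2, Sym2.eq_swap⟩
    have hfinX₀ : (edgeCut G X₀).Finite := hEHfin.subset hsub
    have h4 : 4 ≤ (edgeCut G X₀).ncard := by
      rcases hconn X₀ ⟨v0, hv0X⟩ ⟨v1, hv1X⟩ with h | h
      · exact absurd hfinX₀ h
      · exact h
    rw [Set.ncard_eq_toFinset_card _ hfinX₀] at h4
    refine le_trans h4 ?_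
    -- default element
    have hnefin : hfinX₀.toFinset.Nonempty := by
      rw [← Finset.card_pos]
      omega
    obtain ⟨m₀, hm₀⟩ := hnefin
    have hm₀EH : m₀ ∈ EH := hsub (hfinX₀.mem_toFinset.mp hm₀)
    refine Finset.card_le_card_of_injOn
      (fun m => if hm : m ∈ EH then (⟨m, hm⟩ : ↥EH) else ⟨m₀, hm₀EH⟩) ?_ ?_
    · intro m hm
      have hmX : m ∈ edgeCut G X₀ := hfinX₀.mem_toFinset.mp hm
      have hmEH : m ∈ EH := hsub hmX
      beta_reduce
      rw [dif_pos hmEH]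
      obtain ⟨x, y, hadjxy, hx, hy, hmeq⟩ := hmX
      rw [Finset.mem_coe, Finset.mem_filter]
      refine ⟨Finset.mem_univ _, ?_⟩
      have hrepm := (hrep ⟨m, hmEH⟩).trans hmeq
      rcases Sym2.eq_iff.mp hrepm with ⟨h1, h2⟩ | ⟨h1, h2⟩
      · left
        constructor
        · show (⟨code (rep ⟨m, hmEH⟩).1, _⟩ : Q) ∈ Y
          rw [h1]; exact hx
        · show ¬ (⟨code (rep ⟨m, hmEH⟩).2, _⟩ : Q) ∈ Y
          rw [h2]; exact hy
      · right
        constructor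
        · show (⟨code (rep ⟨m, hmEH⟩).2, _⟩ : Q) ∈ Y
          rw [h2]; exact hx
        · show ¬ (⟨code (rep ⟨m, hmEH⟩).1, _⟩ : Q) ∈ Y
          rw [h1]; exact hy
    · intro m hm m' hm' heq
      have hmEH : m ∈ EH := hsub (hfinX₀.mem_toFinset.mp (by simpa using hm))
      have hm'EH : m' ∈ EH := hsub (hfinX₀.mem_toFinset.mp (by simpa using hm'))
      beta_reduce at heq
      rw [dif_pos hmEH, dif_pos hm'EH] at heq
      exact congrArg Subtype.val heq
  -- apply the finite flow theorem
  obtain ⟨g, hgval, hgdiv⟩ := Flow4.finFlow (s := sQ) (t := tQ) hcut4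
  have hb : ∀ e : ↥EH, -3 ≤ g e ∧ g e ≤ 3 := fun e => abs_le.mp (hgval e).2
  have hbneg : ∀ e : ↥EH, -3 ≤ -(g e) ∧ -(g e) ≤ 3 := fun e =>
    ⟨by linarith [(hb e).2], by linarith [(hb e).1]⟩
  -- construct the partial flow on V × V
  set fF : V → V → KK := fun x y =>
    if hm : (s(x, y) : Sym2 V) ∈ EH then
      (if (rep (⟨s(x, y), hm⟩ : ↥EH)).1 = x then mkK (g ⟨s(x, y), hm⟩) (hb _)
        else mkK (-(g ⟨s(x, y), hm⟩)) (hbneg _))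
    else if G.Adj x y then
      (if WellOrderingRel x y then mkK 1 (by norm_num) else mkK (-1) (by norm_num))
    else mkK 0 (by norm_num)
    with hfF
  have hval_in : ∀ (x y : V) (hm : (s(x, y) : Sym2 V) ∈ EH),
      (fF x y).1 = if (rep (⟨s(x, y), hm⟩ : ↥EH)).1 = x then g ⟨s(x, y), hm⟩
        else -(g ⟨s(x, y), hm⟩) := by
    intro x y hm
    simp only [hfF]
    rw [dif_pos hm]
    split_ifs <;> rfl
  have hval_adj : ∀ (x y : V), (s(x, y) : Sym2 V) ∉ EH → G.Adj x y →
      (fF x y).1 = if WellOrderingRel x y then 1 else -1 := by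
    intro x y hm hadjxy
    simp only [hfF]
    rw [dif_neg hm, if_pos hadjxy]
    split_ifs <;> rfl
  have hval_nadj : ∀ (x y : V), (s(x, y) : Sym2 V) ∉ EH → ¬ G.Adj x y →
      (fF x y).1 = 0 := by
    intro x y hm hadjxy
    simp only [hfF]
    rw [dif_neg hm, if_neg hadjxy]
    rfl
  have hEH_adj : ∀ (x y : V) (hm : (s(x, y) : Sym2 V) ∈ EH), G.Adj x y := by
    intro x y hm
    have h1 := hrep ⟨s(x, y), hm⟩
    have h2 := hadj ⟨s(x, y), hm⟩
    rcases Sym2.eq_iff.mp h1 with ⟨ha, hb'⟩ | ⟨ha, hb'⟩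
    · rwa [ha, hb'] at h2
    · rw [ha, hb'] at h2; exact h2.symm
  -- antisymmetry
  have hanti : ∀ x y : V, (fF y x).1 = -(fF x y).1 := by
    intro x y
    by_cases hm : (s(x, y) : Sym2 V) ∈ EH
    · have hm' : (s(y, x) : Sym2 V) ∈ EH := by
        rw [show (s(y, x) : Sym2 V) = s(x, y) from Sym2.eq_swap]
        exact hm
      have hxy : x ≠ y := G.ne_of_adj (hEH_adj x y hm)
      have hee : (⟨s(y, x), hm'⟩ : ↥EH) = ⟨s(x, y), hm⟩ := Subtype.ext Sym2.eq_swap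
      rw [hval_in y x hm', hval_in x y hm, hee]
      have h1 := hrep ⟨s(x, y), hm⟩
      rcases Sym2.eq_iff.mp h1 with ⟨ha, hb'⟩ | ⟨ha, hb'⟩
      · rw [ha, if_neg hxy, if_pos rfl]
      · rw [ha, if_pos rfl, if_neg (fun h => hxy h.symm), neg_neg]
    · have hm' : (s(y, x) : Sym2 V) ∉ EH := by
        rw [show (s(y, x) : Sym2 V) = s(x, y) from Sym2.eq_swap]
        exact hm
      by_cases hadjxy : G.Adj x y
      · have hxy := G.ne_of_adj hadjxy
        rw [hval_adj y x hm' hadjxy.symm, hval_adj x y hm hadjxy]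
        rcases trichotomous (r := WellOrderingRel) x y with h | h | h
        · rw [if_pos h, if_neg (asymm h)]
        · exact absurd h hxy
        · rw [if_pos h, if_neg (asymm h)]
          norm_num
      · rw [hval_nadj y x hm' (fun h => hadjxy h.symm), hval_nadj x y hm hadjxy]
        ring
  -- nonzero on edges
  have hnz : ∀ x y : V, G.Adj x y → (fF x y).1 ≠ 0 := by
    intro x y hadjxy
    by_cases hm : (s(x, y) : Sym2 V) ∈ EH
    · rw [hval_in x y hm]
      split_ifs
      · exact (hgval _).1
      · exact neg_ne_zero.mpr (hgval _).1
    · rw [hval_adj x y hm hadjxy]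
      split_ifs <;> norm_num
  have hzero : ∀ x y : V, ¬ G.Adj x y → (fF x y).1 = 0 := by
    intro x y hadjxy
    by_cases hm : (s(x, y) : Sym2 V) ∈ EH
    · exact absurd (hEH_adj x y hm) hadjxy
    · exact hval_nadj x y hm hadjxy
  -- the cut condition
  have hcutX : ∀ X, ∀ hX𝒞 : X ∈ 𝒞,
      ∑ᶠ p ∈ orientedCut G X, ((fF p.1 p.2).1 : ℤ) = 0 := by
    intro X hX𝒞
    have hXfin := hcutfin X hX𝒞
    set C : ↥𝒞 := ⟨X, hX𝒞⟩ with hC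
    set YX : Finset Q := Finset.univ.filter (fun q => q.1 C = true) with hYX
    have hsQmem : ∀ e : ↥EH, (sQ e ∈ YX ↔ (rep e).1 ∈ X) := by
      intro e
      rw [hYX, Finset.mem_filter]
      simp only [Finset.mem_univ, true_and]
      exact hcodeX (rep e).1 C
    have htQmem : ∀ e : ↥EH, (tQ e ∈ YX ↔ (rep e).2 ∈ X) := by
      intro e
      rw [hYX, Finset.mem_filter]
      simp only [Finset.mem_univ, true_and]
      exact hcodeX (rep e).2 C
    have hgcut := Flow4.cut_sum (s := sQ) (t := tQ) hgdiv YX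
    rw [← Set.Finite.coe_toFinset hXfin, finsum_mem_coe_finset]
    set fwd := Finset.univ.filter (fun e : ↥EH => sQ e ∈ YX ∧ tQ e ∉ YX) with hfwd
    set bwd := Finset.univ.filter (fun e : ↥EH => tQ e ∈ YX ∧ sQ e ∉ YX) with hbwd
    rcases Finset.eq_empty_or_nonempty hXfin.toFinset with hemp | ⟨p₀, hp₀⟩
    · -- empty cut: but then also fwd/bwd empty — easier: sum over empty
      rw [hemp, Finset.sum_empty]
    · have hp₀cut : p₀ ∈ orientedCut G X := hXfin.mem_toFinset.mp hp₀
      have hp₀EH : (s(p₀.1, p₀.2) : Sym2 V) ∈ EH :=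
        hXsubEH X hX𝒞 ⟨p₀.1, p₀.2, hp₀cut.1, hp₀cut.2.1, hp₀cut.2.2, rfl⟩
      set e₀ : ↥EH := ⟨s(p₀.1, p₀.2), hp₀EH⟩
      have hdisjfb : Disjoint fwd bwd := by
        rw [Finset.disjoint_left]
        intro e he1 he2
        rw [hfwd, Finset.mem_filter] at he1
        rw [hbwd, Finset.mem_filter] at he2
        exact he1.2.2 he2.2.1
      have hsum1 : ∑ p ∈ hXfin.toFinset, ((fF p.1 p.2).1 : ℤ)
          = ∑ e ∈ fwd ∪ bwd, (if (rep e).1 ∈ X then g e else - g e) := by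
        refine Finset.sum_nbij'
          (fun p => if hp : (s(p.1, p.2) : Sym2 V) ∈ EH then (⟨s(p.1, p.2), hp⟩ : ↥EH)
            else e₀)
          (fun e => if (rep e).1 ∈ X then rep e else ((rep e).2, (rep e).1))
          ?_ ?_ ?_ ?_ ?_
        · intro p hp
          have hpcut : p ∈ orientedCut G X := hXfin.mem_toFinset.mp hp
          have hpEH : (s(p.1, p.2) : Sym2 V) ∈ EH :=
            hXsubEH X hX𝒞 ⟨p.1, p.2, hpcut.1, hpcut.2.1, hpcut.2.2, rfl⟩
          beta_reduce
          rw [dif_pos hpEH]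
          have hrepp := hrep ⟨s(p.1, p.2), hpEH⟩
          rcases Sym2.eq_iff.mp hrepp with ⟨h1, h2⟩ | ⟨h1, h2⟩
          · refine Finset.mem_union_left _ ?_
            rw [hfwd, Finset.mem_filter]
            refine ⟨Finset.mem_univ _, ?_, ?_⟩
            · rw [hsQmem, h1]; exact hpcut.2.1
            · rw [htQmem, h2]; exact hpcut.2.2
          · refine Finset.mem_union_right _ ?_
            rw [hbwd, Finset.mem_filter]
            refine ⟨Finset.mem_univ _, ?_, ?_⟩
            · rw [htQmem, h2]; exact hpcut.2.1
            · rw [hsQmem, h1]; exact hpcut.2.2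
        · intro e he
          rw [Finset.mem_union] at he
          rw [Set.Finite.mem_toFinset]
          beta_reduce
          rcases he with he | he
          · rw [hfwd, Finset.mem_filter] at he
            have h1 : (rep e).1 ∈ X := (hsQmem e).mp he.2.1
            have h2 : (rep e).2 ∉ X := fun hh => he.2.2 ((htQmem e).mpr hh)
            rw [if_pos h1]
            exact ⟨hadj e, h1, h2⟩
          · rw [hbwd, Finset.mem_filter] at he
            have h1 : (rep e).1 ∉ X := fun hh => he.2.2 ((hsQmem e).mpr hh)
            have h2 : (rep e).2 ∈ X := (htQmem e).mp he.2.1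
            rw [if_neg h1]
            exact ⟨(hadj e).symm, h2, h1⟩
        · intro p hp
          have hpcut : p ∈ orientedCut G X := hXfin.mem_toFinset.mp hp
          have hpEH : (s(p.1, p.2) : Sym2 V) ∈ EH :=
            hXsubEH X hX𝒞 ⟨p.1, p.2, hpcut.1, hpcut.2.1, hpcut.2.2, rfl⟩
          beta_reduce
          rw [dif_pos hpEH]
          have hrepp := hrep ⟨s(p.1, p.2), hpEH⟩
          rcases Sym2.eq_iff.mp hrepp with ⟨h1, h2⟩ | ⟨h1, h2⟩
          · rw [if_pos (show (rep ⟨s(p.1, p.2), hpEH⟩).1 ∈ X by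
              rw [h1]; exact hpcut.2.1)]
            exact Prod.ext h1 h2
          · rw [if_neg (show ¬ (rep ⟨s(p.1, p.2), hpEH⟩).1 ∈ X by
              rw [h1]; exact hpcut.2.2)]
            exact Prod.ext h2 h1
        · intro e he
          rw [Finset.mem_union] at he
          beta_reduce
          rcases he with he | he
          · rw [hfwd, Finset.mem_filter] at he
            have h1 : (rep e).1 ∈ X := (hsQmem e).mp he.2.1
            rw [if_pos h1]
            have hc : (s((rep e).1, (rep e).2) : Sym2 V) ∈ EH := by
              rw [hrep e]; exact e.2
            rw [dif_pos hc]
            exact Subtype.ext (hrep e)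
          · rw [hbwd, Finset.mem_filter] at he
            have h1 : (rep e).1 ∉ X := fun hh => he.2.2 ((hsQmem e).mpr hh)
            rw [if_neg h1]
            have hc : (s((rep e).2, (rep e).1) : Sym2 V) ∈ EH := by
              rw [show (s((rep e).2, (rep e).1) : Sym2 V) = s((rep e).1, (rep e).2)
                from Sym2.eq_swap, hrep e]
              exact e.2
            rw [dif_pos hc]
            exact Subtype.ext ((Sym2.eq_swap).trans (hrep e))
        · intro p hp
          have hpcut : p ∈ orientedCut G X := hXfin.mem_toFinset.mp hp
          have hpEH : (s(p.1, p.2) : Sym2 V) ∈ EH :=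
            hXsubEH X hX𝒞 ⟨p.1, p.2, hpcut.1, hpcut.2.1, hpcut.2.2, rfl⟩
          beta_reduce
          rw [dif_pos hpEH, hval_in p.1 p.2 hpEH]
          have hrepp := hrep ⟨s(p.1, p.2), hpEH⟩
          have hne := G.ne_of_adj hpcut.1
          rcases Sym2.eq_iff.mp hrepp with ⟨h1, h2⟩ | ⟨h1, h2⟩
          · rw [if_pos h1, if_pos (show (rep ⟨s(p.1, p.2), hpEH⟩).1 ∈ X by
              rw [h1]; exact hpcut.2.1)]
          · rw [if_neg (fun hh => hne (hh.symm.trans h1)),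
              if_neg (show ¬ (rep ⟨s(p.1, p.2), hpEH⟩).1 ∈ X by
                rw [h1]; exact hpcut.2.2)]
      have hsum2 : ∑ e ∈ fwd ∪ bwd, (if (rep e).1 ∈ X then g e else - g e)
          = (∑ e ∈ fwd, g e) - (∑ e ∈ bwd, g e) := by
        rw [Finset.sum_union hdisjfb]
        have hf1 : ∑ e ∈ fwd, (if (rep e).1 ∈ X then g e else - g e)
            = ∑ e ∈ fwd, g e := by
          refine Finset.sum_congr rfl (fun e he => ?_)
          rw [hfwd, Finset.mem_filter] at he
          rw [if_pos ((hsQmem e).mp he.2.1)]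
        have hf2 : ∑ e ∈ bwd, (if (rep e).1 ∈ X then g e else - g e)
            = ∑ e ∈ bwd, - g e := by
          refine Finset.sum_congr rfl (fun e he => ?_)
          rw [hbwd, Finset.mem_filter] at he
          rw [if_neg (fun hh => he.2.2 ((hsQmem e).mpr hh))]
        rw [hf1, hf2, Finset.sum_neg_distrib, sub_eq_add_neg]
      rw [hsum1, hsum2]
      exact hgcut
  refine ⟨fun pr => fF pr.1 pr.2, ?_⟩
  rw [Set.mem_iInter₂]
  intro X hXT
  constructor
  · intro pr
    exact ⟨hnz pr.1 pr.2, hanti pr.1 pr.2, hzero pr.1 pr.2⟩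
  · intro hfin
    have hX𝒞 : X ∈ 𝒞 := by
      rw [h𝒞, Finset.mem_filter]
      exact ⟨hXT, hfin⟩
    exact hcutX X hX𝒞

end Flow4App

/-- Every (possibly infinite) `4`-edge-connected graph (every cut induced by a
nonempty proper vertex set has at least `4` edges) has a `4`-flow: an antisymmetric
map to `{-3,…,-1,1,…,3} ⊆ ℤ` summing to zero over every finite oriented cut. -/
theorem stmt9 {V : Type*} (G : SimpleGraph V)
    (hconn : ∀ X : Set V, X.Nonempty → Xᶜ.Nonempty →
      (edgeCut G X).Infinite ∨ 4 ≤ (edgeCut G X).ncard) :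
    ∃ f : V → V → ℤ,
      (∀ x y, G.Adj x y → f x y ≠ 0 ∧ |f x y| < 4) ∧
      (∀ x y : V, f y x = - f x y) ∧
      (∀ X : Set V, (orientedCut G X).Finite →
        ∑ᶠ p ∈ orientedCut G X, f p.1 p.2 = 0) := by
  classical
  have hclosed : ∀ X : Set V, IsClosed (Flow4App.ZSet G X) := Flow4App.ZSet_closed G
  have hmain : (⋂ X : Set V, Flow4App.ZSet G X).Nonempty := by
    by_contra hemp
    rw [Set.not_nonempty_iff_eq_empty] at hemp
    obtain ⟨T, hT⟩ :=
      (isCompact_univ (X := (V × V) → Flow4App.KK)).elim_finite_subfamily_closed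
        (Flow4App.ZSet G) hclosed (by rw [Set.univ_inter]; exact hemp)
    obtain ⟨f, hf⟩ := Flow4App.fip G hconn T
    rw [Set.eq_empty_iff_forall_notMem] at hT
    exact hT f ⟨Set.mem_univ f, hf⟩
  obtain ⟨fhat, hfhat⟩ := hmain
  have hmem : ∀ X : Set V, fhat ∈ Flow4App.ZSet G X := Set.mem_iInter.mp hfhat
  refine ⟨fun x y => (fhat (x, y)).1, ?_, ?_, ?_⟩
  · intro x y hadj
    refine ⟨((hmem ∅).1 (x, y)).1 hadj, ?_⟩
    have hb := Flow4App.KK_bounds (fhat (x, y))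
    rw [abs_lt]
    constructor <;> linarith [hb.1, hb.2]
  · intro x y
    exact ((hmem ∅).1 (x, y)).2.1
  · intro X hfin
    exact (hmem X).2 hfin
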